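/- arXiv:1010.4766 — 10 statements merged into one kernel-verified Lean document; each statement's English description precedes it below -/
import Mathlib

section
/- Let K be a number field. For every g ∈ P_K⁺, the subgroups P_𝓞⁺ and g P_𝓞⁺ g⁻¹ of P_K⁺ are commensurable, i.e. P_𝓞⁺ ∩ g P_𝓞⁺ g⁻¹ has finite index both in P_𝓞⁺ and in g P_𝓞⁺ g⁻¹. (In other words, (P_𝓞⁺, P_K⁺) is a Hecke pair.) -/
open scoped NumberField

/-- The subgroup `K*₊ ⊆ Kˣ` of totally positive elements of a field `K`. -/
def totallyPositiveUnits (K : Type*) [Field K] : Subgroup Kˣ where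
  carrier := {x | ∀ φ : K →+* ℝ, 0 < φ x}
  mul_mem' {a b} ha hb φ := by
    rw [Units.val_mul, map_mul]; exact mul_pos (ha φ) (hb φ)
  one_mem' φ := by simp
  inv_mem' {a} ha φ := by
    rw [Units.val_inv_eq_inv_val, map_inv₀]
    exact inv_pos.mpr (ha φ)

/-- The subgroup `𝓞*_{K,+} ⊆ Kˣ` of totally positive units of the ring of integers. -/
def totallyPositiveIntegerUnits (K : Type*) [Field K] : Subgroup Kˣ where
  carrier := {x | IsIntegral ℤ (x : K) ∧ IsIntegral ℤ ((x⁻¹ : Kˣ) : K) ∧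
    ∀ φ : K →+* ℝ, 0 < φ x}
  one_mem' := ⟨by simpa using isIntegral_one, by simpa using isIntegral_one,
    fun φ => by simp⟩
  mul_mem' {a b} ha hb := by
    refine ⟨by rw [Units.val_mul]; exact ha.1.mul hb.1, ?_, fun φ => by
      rw [Units.val_mul, map_mul]; exact mul_pos (ha.2.2 φ) (hb.2.2 φ)⟩
    rw [mul_inv_rev, Units.val_mul]
    exact hb.2.1.mul ha.2.1
  inv_mem' {a} ha := ⟨ha.2.1, by simpa using ha.1, fun φ => by
    rw [Units.val_inv_eq_inv_val, map_inv₀]; exact inv_pos.mpr (ha.2.2 φ)⟩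

/-- The action of `Kˣ` on the additive group of `K` by multiplication, as a
homomorphism into `MulAut (Multiplicative K)`. -/
def affineAction (K : Type*) [Field K] : Kˣ →* MulAut (Multiplicative K) where
  toFun x :=
    { toFun := fun y => Multiplicative.ofAdd (x • y.toAdd)
      invFun := fun y => Multiplicative.ofAdd (x⁻¹ • y.toAdd)
      left_inv := fun y => by simp [smul_smul]
      right_inv := fun y => by simp [smul_smul]
      map_mul' := fun a b => by
        simp [toAdd_mul, smul_add, ofAdd_add] }
  map_one' := by
    ext y; simp
  map_mul' a b := by
    ext y; simp [mul_smul]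

/-- The affine group `P_K⁺ = K ⋊ K*₊`, realized as a subgroup of
`K ⋊ Kˣ`. -/
def PKplus (K : Type*) [Field K] : Subgroup (Multiplicative K ⋊[affineAction K] Kˣ) :=
  (totallyPositiveUnits K).comap (SemidirectProduct.rightHom)

/-- The subgroup `P_𝓞⁺ = 𝓞_K ⋊ 𝓞*_{K,+}` of `K ⋊ Kˣ`. -/
def POplus (K : Type*) [Field K] : Subgroup (Multiplicative K ⋊[affineAction K] Kˣ) where
  carrier := {p | IsIntegral ℤ p.left.toAdd ∧ p.right ∈ totallyPositiveIntegerUnits K}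
  one_mem' := ⟨by simpa using isIntegral_zero, one_mem _⟩
  mul_mem' {a b} ha hb := by
    refine ⟨?_, mul_mem ha.2 hb.2⟩
    rw [SemidirectProduct.mul_left]
    simp only [affineAction, MonoidHom.coe_mk, OneHom.coe_mk, MulEquiv.coe_mk,
      Equiv.coe_fn_mk, toAdd_mul, toAdd_ofAdd, Units.smul_def,
      smul_eq_mul]
    exact ha.1.add (ha.2.1.mul hb.1)
  inv_mem' {a} ha := by
    refine ⟨?_, inv_mem ha.2⟩
    rw [SemidirectProduct.inv_left]
    simp only [affineAction, map_inv, MonoidHom.coe_mk, OneHom.coe_mk, MulEquiv.coe_mk,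
      MulAut.inv_def, MulEquiv.symm_mk, Equiv.coe_fn_mk, toAdd_inv,
      toAdd_ofAdd, Units.smul_def, smul_eq_mul]
    exact ((ha.2).2.1.mul ha.1).neg

lemma finite_quot_of_invariant {G : Type*} [Group G] (H : Subgroup G) {T : Type*} [Finite T]
    (F : G → T) (h : ∀ p q : G, F p = F q → p⁻¹ * q ∈ H) : Finite (G ⧸ H) := by
  have h1 : Finite (Quotient (Setoid.ker F)) :=
    Finite.of_equiv (Set.range F) (Setoid.quotientKerEquivRange F).symm
  exact Finite.of_surjective
    ((Quotient.lift (QuotientGroup.mk : G → G ⧸ H)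
      (fun p q hpq => QuotientGroup.eq.mpr (h p q hpq))) :
        Quotient (Setoid.ker F) → G ⧸ H)
    (fun z => QuotientGroup.induction_on z fun g => ⟨Quotient.mk _ g, rfl⟩)

lemma mem_map_conj_iff {G : Type*} [Group G] (H : Subgroup G) (g z : G) :
    z ∈ H.map (MulAut.conj g).toMonoidHom ↔ g⁻¹ * z * g ∈ H := by
  rw [Subgroup.mem_map_equiv]
  simp [mul_assoc]

open Pointwise in
lemma conjAct_smul_eq_map {G : Type*} [Group G] (H : Subgroup G) (g : G) :
    (ConjAct.toConjAct g) • H = H.map (MulAut.conj g).toMonoidHom := by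
  ext x
  rw [Subgroup.mem_smul_pointwise_iff_exists, Subgroup.mem_map]
  simp [ConjAct.smul_def]

open Pointwise in
lemma relindex_conj_smul {G : Type*} [Group G] (H K : Subgroup G) (g : ConjAct G) :
    ((g • H).relIndex (g • K)) = H.relIndex K := by
  rw [Subgroup.relIndex, Subgroup.relIndex, Subgroup.index, Subgroup.index]
  exact (Nat.card_congr (Subgroup.quotConjEquiv H K g)).symm

lemma left_toAdd_mul {K : Type*} [Field K] (h k : Multiplicative K ⋊[affineAction K] Kˣ) :
    (h * k).left.toAdd = h.left.toAdd + (h.right : K) * k.left.toAdd := by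
  rw [SemidirectProduct.mul_left]
  simp [affineAction, Units.smul_def]

lemma left_toAdd_inv {K : Type*} [Field K] (h : Multiplicative K ⋊[affineAction K] Kˣ) :
    (h⁻¹).left.toAdd = -(((h.right⁻¹ : Kˣ) : K) * h.left.toAdd) := by
  rw [SemidirectProduct.inv_left]
  simp [affineAction, Units.smul_def]

lemma mem_POplus_iff {K : Type*} [Field K] (p : Multiplicative K ⋊[affineAction K] Kˣ) :
    p ∈ POplus K ↔ IsIntegral ℤ p.left.toAdd ∧ p.right ∈ totallyPositiveIntegerUnits K :=
  Iff.rfl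


/-- An element of `K` integral over `ℤ`, as an element of `𝓞 K`. -/
def toOK {K : Type*} [Field K] (x : K) (h : IsIntegral ℤ x) : 𝓞 K := ⟨x, h⟩

@[simp]
lemma algebraMap_toOK {K : Type*} [Field K] (x : K) (h : IsIntegral ℤ x) :
    algebraMap (𝓞 K) K (toOK x h) = x := rfl

lemma key_relindex (K : Type*) [Field K] [NumberField K]
    (g : Multiplicative K ⋊[affineAction K] Kˣ) :
    (((POplus K).map (MulAut.conj g).toMonoidHom).relIndex (POplus K)) ≠ 0 := by
  obtain ⟨r, d, hdnz, hrd⟩ := IsFractionRing.div_surjective (A := 𝓞 K) g.left.toAdd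
  obtain ⟨nr, n, hnnz, hn⟩ := IsFractionRing.div_surjective (A := 𝓞 K) (((g.right⁻¹ : Kˣ) : K))
  have hd0 : d ≠ 0 := nonZeroDivisors.ne_zero hdnz
  have hn0 : n ≠ 0 := nonZeroDivisors.ne_zero hnnz
  set M : 𝓞 K := n * d with hMdef
  have hM : M ≠ 0 := mul_ne_zero hn0 hd0
  set I : Ideal (𝓞 K) := Ideal.span {M} with hIdef
  haveI : Finite ((𝓞 K) ⧸ I) :=
    Ideal.finiteQuotientOfFreeOfNeBot I
      (by simpa [hIdef, Ideal.span_singleton_eq_bot] using hM)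
  set F : (POplus K) → ((𝓞 K) ⧸ I) × ((𝓞 K) ⧸ I) := fun p =>
    (Ideal.Quotient.mk I (toOK p.1.left.toAdd ((mem_POplus_iff p.1).mp p.2).1),
     Ideal.Quotient.mk I (toOK ((p.1.right : Kˣ) : K) ((mem_POplus_iff p.1).mp p.2).2.1)) with hF
  rw [Subgroup.relIndex]
  haveI : Finite ((POplus K) ⧸ ((POplus K).map (MulAut.conj g).toMonoidHom).subgroupOf (POplus K)) := by
    apply finite_quot_of_invariant _ F
    intro p q hFpq
    have h1 := congrArg Prod.fst hFpq
    have h2 := congrArg Prod.snd hFpq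
    simp only [hF] at h1 h2
    replace h1 := Ideal.Quotient.eq.mp h1
    replace h2 := Ideal.Quotient.eq.mp h2
    rw [hIdef, Ideal.mem_span_singleton] at h1 h2
    obtain ⟨s, hs⟩ := h1
    obtain ⟨t, ht⟩ := h2
    have hsK : p.1.left.toAdd - q.1.left.toAdd = ((M : 𝓞 K) : K) * (s : K) := by
      simpa using congrArg (algebraMap (𝓞 K) K) hs
    have htK : ((p.1.right : Kˣ) : K) - ((q.1.right : Kˣ) : K) = ((M : 𝓞 K) : K) * (t : K) := by
      simpa using congrArg (algebraMap (𝓞 K) K) ht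
    rw [Subgroup.mem_subgroupOf]
    have hco : ((p⁻¹ * q : POplus K) : Multiplicative K ⋊[affineAction K] Kˣ)
        = (p : Multiplicative K ⋊[affineAction K] Kˣ)⁻¹ * q := rfl
    rw [hco, mem_map_conj_iff, mem_POplus_iff]
    constructor
    · simp only [left_toAdd_mul, left_toAdd_inv, SemidirectProduct.mul_right,
        SemidirectProduct.inv_right]
      have hu : IsIntegral ℤ ((((p : Multiplicative K ⋊[affineAction K] Kˣ).right)⁻¹ : Kˣ) : K) :=
        ((mem_POplus_iff _).mp p.2).2.2.1
      set c₀ : 𝓞 K := -(nr * toOK _ hu * (d * s + t * r)) with hc₀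
      have hcoe : (algebraMap (𝓞 K) K) c₀
          = -((algebraMap (𝓞 K) K nr) * (((p : Multiplicative K ⋊[affineAction K] Kˣ).right : K))⁻¹
              * ((algebraMap (𝓞 K) K d) * (algebraMap (𝓞 K) K s)
                + (algebraMap (𝓞 K) K t) * (algebraMap (𝓞 K) K r))) := by
        simp [hc₀, mul_add, Units.val_inv_eq_inv_val]
      have hx0 : ((g.right : Kˣ) : K) ≠ 0 := Units.ne_zero _
      have hu0 : (((p : Multiplicative K ⋊[affineAction K] Kˣ).right : Kˣ) : K) ≠ 0 := Units.ne_zero _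
      have hdK : (algebraMap (𝓞 K) K) d ≠ 0 :=
        IsFractionRing.to_map_ne_zero_of_mem_nonZeroDivisors hdnz
      have hnK : (algebraMap (𝓞 K) K) n ≠ 0 :=
        IsFractionRing.to_map_ne_zero_of_mem_nonZeroDivisors hnnz
      rw [div_eq_iff hdK] at hrd
      rw [div_eq_iff hnK] at hn
      simp only [hMdef, map_mul] at hsK htK
      simp only [Units.val_inv_eq_inv_val, Units.val_mul] at hn ⊢
      have hint : IsIntegral ℤ ((algebraMap (𝓞 K) K) c₀) :=
        NumberField.RingOfIntegers.isIntegral_coe c₀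
      convert hint using 1
      have hb : Multiplicative.toAdd ((q : Multiplicative K ⋊[affineAction K] Kˣ)).left
          = Multiplicative.toAdd ((p : Multiplicative K ⋊[affineAction K] Kˣ)).left
            - (algebraMap (𝓞 K) K) n * (algebraMap (𝓞 K) K) d * (algebraMap (𝓞 K) K) s := by
        linear_combination -hsK
      have hw : (((q : Multiplicative K ⋊[affineAction K] Kˣ)).right : K)
          = (((p : Multiplicative K ⋊[affineAction K] Kˣ)).right : K)
            - (algebraMap (𝓞 K) K) n * (algebraMap (𝓞 K) K) d * (algebraMap (𝓞 K) K) t := by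
        linear_combination -htK
      rw [hcoe, hb, hw, hn, hrd]
      field_simp
      ring
    · simp only [SemidirectProduct.mul_right, SemidirectProduct.inv_right]
      have : g.right⁻¹ * ((p:Multiplicative K ⋊[affineAction K] Kˣ).right⁻¹ * (q:Multiplicative K ⋊[affineAction K] Kˣ).right) * g.right
          = (p:Multiplicative K ⋊[affineAction K] Kˣ).right⁻¹ * (q:Multiplicative K ⋊[affineAction K] Kˣ).right := by
        rw [mul_comm g.right⁻¹, mul_assoc, inv_mul_cancel, mul_one]
      rw [this]
      exact mul_mem (inv_mem ((mem_POplus_iff _).mp p.2).2) ((mem_POplus_iff _).mp q.2).2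
  exact Subgroup.index_ne_zero_of_finite


open Pointwise in
/-- `(P_𝓞⁺, P_K⁺)` is a Hecke pair: for every `g ∈ P_K⁺`, the subgroups
`P_𝓞⁺` and `g P_𝓞⁺ g⁻¹` are commensurable, i.e. their intersection has finite index
in both. -/
theorem hecke_pair_POplus_PKplus (K : Type*) [Field K] [NumberField K]
    (g : Multiplicative K ⋊[affineAction K] Kˣ) (hg : g ∈ PKplus K) :
    Subgroup.Commensurable (POplus K) ((POplus K).map (MulAut.conj g).toMonoidHom) := by
  constructor
  · have h2 := relindex_conj_smul ((ConjAct.toConjAct g)⁻¹ • (POplus K)) (POplus K)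
      (ConjAct.toConjAct g)
    rw [smul_inv_smul] at h2
    rw [← conjAct_smul_eq_map, h2, ← ConjAct.toConjAct_inv, conjAct_smul_eq_map]
    exact key_relindex K g⁻¹
  · exact key_relindex K g
end

section
/- Let K be a number field, Γ = P_𝓞⁺, and g = (y,x) ∈ P_K⁺ with multiplicative part x ∈ K*₊. Then the finite indices satisfy [Γ : Γ ∩ g⁻¹Γg] · |N_{K/ℚ}(x)| = [Γ : Γ ∩ gΓg⁻¹], where N_{K/ℚ} denotes the field norm from K to ℚ. (Equivalently, the modular function of the Hecke pair (P_𝓞⁺, P_K⁺), defined as the ratio of the number of left cosets to the number of right cosets of Γ in ΓgΓ, equals |N_{K/ℚ}(x)|⁻¹.) -/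
open scoped NumberField

open Subgroup
open scoped Pointwise



/-- Coset-space version of the second isomorphism theorem. -/
lemma aux_relindex_sup {G : Type*} [Group G] (H N : Subgroup G) [N.Normal] :
    H.relIndex (H ⊔ N) = (H ⊓ N).relIndex N := by
  rw [relIndex, relIndex, inf_subgroupOf_right]
  have key : ∀ a b : N, a⁻¹ * b ∈ H.subgroupOf N ↔
      (Subgroup.inclusion le_sup_right a)⁻¹ * Subgroup.inclusion le_sup_right b
        ∈ H.subgroupOf (H ⊔ N) := by
    intro a b
    simp only [mem_subgroupOf]
    rfl
  refine (Nat.card_congr (Equiv.ofBijective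
    (Quotient.map' (Subgroup.inclusion le_sup_right) (fun a b h =>
      QuotientGroup.leftRel_apply.mpr
        ((key a b).mp (QuotientGroup.leftRel_apply.mp h)))) ⟨?_, ?_⟩)).symm
  · refine Quotient.ind₂' fun a b h => ?_
    exact Quotient.sound' (QuotientGroup.leftRel_apply.mpr
      ((key a b).mpr (QuotientGroup.leftRel_apply.mp (Quotient.exact' h))))
  · refine Quotient.ind' fun x => ?_
    obtain ⟨xv, hx⟩ := x
    have hx' : xv ∈ (N : Set G) * (H : Set G) := by
      rw [← Subgroup.normal_mul N H, sup_comm]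
      exact hx
    obtain ⟨n, hn, h, hh, rfl⟩ := hx'
    refine ⟨Quotient.mk'' ⟨n, hn⟩, Quotient.sound' ?_⟩
    rw [QuotientGroup.leftRel_apply, mem_subgroupOf]
    simpa using hh

lemma aux_relindex_decomp {G Q : Type*} [Group G] [Group Q] (π : G →* Q) (Γ D : Subgroup G)
    (hD : D ≤ Γ) :
    D.relIndex Γ = (D ⊓ π.ker).relIndex (Γ ⊓ π.ker) * (D.map π).relIndex (Γ.map π) := by
  set π' : ↥Γ →* Q := π.comp Γ.subtype with hπ'
  set D₀ := D.subgroupOf Γ with hD₀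
  have hker : π'.ker = π.ker.subgroupOf Γ := rfl
  have h1 : D₀.relIndex (D₀ ⊔ π'.ker) * (D₀ ⊔ π'.ker).index = D₀.index :=
    relIndex_mul_index le_sup_left
  have h2 : D₀.relIndex (D₀ ⊔ π'.ker) = (D ⊓ π.ker).relIndex (Γ ⊓ π.ker) := by
    have e2 : π'.ker = (Γ ⊓ π.ker).subgroupOf Γ := by
      rw [hker, inf_comm, inf_subgroupOf_right]
    have e3 : D₀ ⊓ π'.ker = (D ⊓ π.ker).subgroupOf Γ := by
      rw [hker, hD₀, subgroupOf, subgroupOf, subgroupOf, ← Subgroup.comap_inf]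
    rw [aux_relindex_sup, e3, e2, relIndex_subgroupOf (inf_le_left : Γ ⊓ π.ker ≤ Γ)]
  have h3 : (D₀ ⊔ π'.ker).index = (D.map π).relIndex (Γ.map π) := by
    rw [← Subgroup.comap_map_eq π' D₀, index_comap]
    congr 1
    · rw [hπ', ← Subgroup.map_map, hD₀, subgroupOf_map_subtype, inf_eq_left.mpr hD]
    · rw [hπ', MonoidHom.range_eq_map, ← Subgroup.map_map]
      congr 1
      rw [← MonoidHom.range_eq_map, Subgroup.range_subtype]
  have : D.relIndex Γ = D₀.index := rfl
  rw [this, ← h1, h2, h3]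

lemma aux_relindex_map_inj {G G' : Type*} [Group G] [Group G'] {f : G →* G'}
    (hf : Function.Injective f) (A B : Subgroup G) :
    (A.map f).relIndex (B.map f) = A.relIndex B := by
  rw [← Subgroup.relIndex_comap, Subgroup.comap_map_eq_self_of_injective hf]


/-- The subgroup of `Multiplicative K` of integral elements. -/
def Omul (K : Type*) [Field K] : Subgroup (Multiplicative K) where
  carrier := {a | IsIntegral ℤ a.toAdd}
  one_mem' := by simpa using isIntegral_zero
  mul_mem' {a b} ha hb := by simpa using IsIntegral.add ha hb
  inv_mem' {a} ha := by simpa using IsIntegral.neg ha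

lemma mem_Omul {K : Type*} [Field K] {a : Multiplicative K} :
    a ∈ Omul K ↔ IsIntegral ℤ a.toAdd := Iff.rfl

lemma affineAction_apply {K : Type*} [Field K] (u : Kˣ) (b : Multiplicative K) :
    (affineAction K u).toMonoidHom b = Multiplicative.ofAdd ((u : K) * b.toAdd) := rfl

lemma affineAction_apply' {K : Type*} [Field K] (u : Kˣ) (b : Multiplicative K) :
    (affineAction K u) b = Multiplicative.ofAdd ((u : K) * b.toAdd) := rfl

lemma mem_map_affine {K : Type*} [Field K] (u : Kˣ) (a : Multiplicative K) :
    a ∈ (Omul K).map (affineAction K u).toMonoidHom ↔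
      IsIntegral ℤ (((u⁻¹ : Kˣ) : K) * a.toAdd) := by
  constructor
  · rintro ⟨b, hb, rfl⟩
    replace hb : IsIntegral ℤ b.toAdd := hb
    rw [MulEquiv.coe_toMonoidHom, affineAction_apply', toAdd_ofAdd, ← mul_assoc,
      Units.inv_mul, one_mul]
    exact hb
  · intro h
    refine ⟨Multiplicative.ofAdd (((u⁻¹ : Kˣ) : K) * a.toAdd), h, ?_⟩
    rw [MulEquiv.coe_toMonoidHom, affineAction_apply', toAdd_ofAdd, ← mul_assoc,
      Units.mul_inv, one_mul, ofAdd_toAdd]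

open NumberField in
noncomputable def OmulEquiv (K : Type*) [Field K] [NumberField K] : ↥(Omul K) ≃ 𝓞 K where
  toFun b := ⟨Multiplicative.toAdd b.1, b.2⟩
  invFun a := ⟨Multiplicative.ofAdd (a : K), a.isIntegral_coe⟩
  left_inv b := rfl
  right_inv a := rfl

open NumberField in
lemma relIndex_map_affine_int (K : Type*) [Field K] [NumberField K] (z : 𝓞 K)
    (hz : (z : K) ≠ 0) :
    ((Omul K).map (affineAction K (Units.mk0 (z : K) hz)).toMonoidHom).relIndex (Omul K)
      = (Algebra.norm ℤ z).natAbs := by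
  rw [← Ideal.absNorm_span_singleton z, Ideal.absNorm_apply, Submodule.cardQuot_apply]
  rw [Subgroup.relIndex, Subgroup.index_eq_card]
  apply Nat.card_congr
  refine Quotient.congr (OmulEquiv K) fun a b => ?_
  rw [QuotientGroup.leftRel_apply, Submodule.quotientRel_def, Subgroup.mem_subgroupOf]
  rw [Ideal.mem_span_singleton, mem_map_affine]
  have e1 : ((((Units.mk0 (z : K) hz))⁻¹ : Kˣ) : K) = (z : K)⁻¹ := by simp
  have e2 : Multiplicative.toAdd ((a⁻¹ * b : ↥(Omul K)) : Multiplicative K)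
      = -Multiplicative.toAdd (a : Multiplicative K)
        + Multiplicative.toAdd (b : Multiplicative K) := rfl
  have e3 : algebraMap (𝓞 K) K (OmulEquiv K a) = Multiplicative.toAdd (a : Multiplicative K) := rfl
  have e4 : algebraMap (𝓞 K) K (OmulEquiv K b) = Multiplicative.toAdd (b : Multiplicative K) := rfl
  set a' : K := Multiplicative.toAdd (a : Multiplicative K)
  set b' : K := Multiplicative.toAdd (b : Multiplicative K)
  rw [e1, e2]
  constructor
  · intro h
    refine ⟨-⟨(z : K)⁻¹ * (-a' + b'), h⟩, RingOfIntegers.ext ?_⟩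
    push_cast [RingOfIntegers.map_mk]
    show a' - b' = (z : K) * -((z : K)⁻¹ * (-a' + b'))
    field_simp
    ring
  · rintro ⟨c, hc⟩
    have hc' : a' - b' = (z : K) * (c : K) := by
      have := congrArg (algebraMap (𝓞 K) K) hc
      push_cast at this
      exact this
    have : (z : K)⁻¹ * (-a' + b') = -(c : K) := by
      rw [neg_add_eq_sub, ← neg_sub a' b', hc', mul_neg, inv_mul_cancel_left₀ hz]
    rw [this]
    exact (RingOfIntegers.isIntegral_coe c).neg

open NumberField in
lemma key_lattice (K : Type*) [Field K] [NumberField K] (x : Kˣ) :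
    (((Omul K ⊓ (Omul K).map (affineAction K x).toMonoidHom).relIndex
        ((Omul K).map (affineAction K x).toMonoidHom) : ℚ))
        * |Algebra.norm ℚ ((x : Kˣ) : K)| =
      ((Omul K ⊓ (Omul K).map (affineAction K x).toMonoidHom).relIndex (Omul K) : ℚ) := by
  obtain ⟨z, w, hw, hx⟩ := IsFractionRing.div_surjective (A := 𝓞 K) ((x : Kˣ) : K)
  have hw0 : w ≠ 0 := nonZeroDivisors.ne_zero hw
  have hwK : (w : K) ≠ 0 := fun h => hw0 (RingOfIntegers.coe_eq_zero_iff.mp h)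
  have hxw : ((x : Kˣ) : K) * (w : K) = (z : K) := by
    field_simp at hx
    rw [mul_comm]; exact hx.symm
  have hzK : (z : K) ≠ 0 := by
    rw [← hxw]
    exact mul_ne_zero (Units.ne_zero x) hwK
  set zu := Units.mk0 ((z : 𝓞 K) : K) hzK with hzu
  set wu := Units.mk0 ((w : 𝓞 K) : K) hwK with hwu
  have hunit : x * wu = zu := Units.ext (by simp [hzu, hwu, hxw])
  set O := Omul K with hO
  set Ox := O.map (affineAction K x).toMonoidHom with hOx
  set Oz := O.map (affineAction K zu).toMonoidHom with hOz
  set Ow := O.map (affineAction K wu).toMonoidHom with hOw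
  have hmapleO : ∀ (c : 𝓞 K) (hc : (c : K) ≠ 0),
      O.map (affineAction K (Units.mk0 (c : K) hc)).toMonoidHom ≤ O := by
    rintro c hc p ⟨b, hb, rfl⟩
    have hb' : IsIntegral ℤ b.toAdd := hb
    rw [hO, mem_Omul, affineAction_apply, toAdd_ofAdd]
    exact (RingOfIntegers.isIntegral_coe c).mul hb'
  have hcomp : ∀ u v : Kˣ,
      (O.map (affineAction K v).toMonoidHom).map (affineAction K u).toMonoidHom
        = O.map (affineAction K (u * v)).toMonoidHom := by
    intro u v
    rw [Subgroup.map_map]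
    congr 1
    refine MonoidHom.ext fun a => ?_
    show (affineAction K u) ((affineAction K v) a) = (affineAction K (u * v)) a
    rw [map_mul (affineAction K) u v, MulAut.mul_apply]
  have hOzO : Oz ≤ O := hmapleO z hzK
  have hOwO : Ow ≤ O := hmapleO w hwK
  have hOzeq : Oz = Ow.map (affineAction K x).toMonoidHom := by
    rw [hOw, hcomp x wu, hunit]
  have hOzOx : Oz ≤ Ox := by
    rw [hOzeq, hOx]
    exact Subgroup.map_mono hOwO
  set t := Oz.relIndex (O ⊓ Ox) with ht
  set r := (O ⊓ Ox).relIndex O with hr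
  set s := (O ⊓ Ox).relIndex Ox with hs
  have htr : t * r = Oz.relIndex O :=
    Subgroup.relIndex_mul_relIndex _ _ _ (le_inf hOzO hOzOx) inf_le_left
  have hts : t * s = Oz.relIndex Ox :=
    Subgroup.relIndex_mul_relIndex _ _ _ (le_inf hOzO hOzOx) inf_le_right
  have hinjx : Function.Injective ((affineAction K x).toMonoidHom :
      Multiplicative K →* Multiplicative K) := (affineAction K x).injective
  have hvalz : Oz.relIndex O = (Algebra.norm ℤ z).natAbs := relIndex_map_affine_int K z hzK
  have hvalw : Oz.relIndex Ox = (Algebra.norm ℤ w).natAbs := by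
    rw [hOzeq, hOx, aux_relindex_map_inj hinjx]
    exact relIndex_map_affine_int K w hwK
  have hNz : (((Algebra.norm ℤ z).natAbs : ℕ) : ℚ) = |Algebra.norm ℚ ((z : 𝓞 K) : K)| := by
    rw [Nat.cast_natAbs, Int.cast_abs, Algebra.coe_norm_int]
  have hNw : (((Algebra.norm ℤ w).natAbs : ℕ) : ℚ) = |Algebra.norm ℚ ((w : 𝓞 K) : K)| := by
    rw [Nat.cast_natAbs, Int.cast_abs, Algebra.coe_norm_int]
  have hnormw0 : |Algebra.norm ℚ ((w : 𝓞 K) : K)| ≠ 0 :=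
    abs_ne_zero.mpr ((Algebra.norm_ne_zero_iff).mpr hwK)
  have hNw0 : (Algebra.norm ℤ w).natAbs ≠ 0 := by
    intro h
    rw [h] at hNw
    exact hnormw0 (by simpa using hNw.symm)
  have hts0 : t * s ≠ 0 := by rw [hts, hvalw]; exact hNw0
  have ht0 : (t : ℚ) ≠ 0 :=
    Nat.cast_ne_zero.mpr (fun h => hts0 (by rw [h, zero_mul]))
  apply mul_left_cancel₀ ht0
  have hnorm : Algebra.norm ℚ ((x : Kˣ) : K) * Algebra.norm ℚ ((w : 𝓞 K) : K)
      = Algebra.norm ℚ ((z : 𝓞 K) : K) := by rw [← map_mul, hxw]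
  calc (t : ℚ) * ((s : ℚ) * |Algebra.norm ℚ ((x : Kˣ) : K)|)
      = ((t * s : ℕ) : ℚ) * |Algebra.norm ℚ ((x : Kˣ) : K)| := by push_cast; ring
    _ = |Algebra.norm ℚ ((w : 𝓞 K) : K)| * |Algebra.norm ℚ ((x : Kˣ) : K)| := by
        rw [hts, hvalw, hNw]
    _ = |Algebra.norm ℚ ((z : 𝓞 K) : K)| := by rw [← abs_mul, mul_comm, hnorm]
    _ = ((t * r : ℕ) : ℚ) := by rw [htr, hvalz, hNz]
    _ = (t : ℚ) * (r : ℚ) := by push_cast; ring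

open SemidirectProduct

/-- The modular function of the Hecke pair `(P_𝓞⁺, P_K⁺)`:
for `g = (y,x) ∈ P_K⁺`, `[Γ : Γ ∩ g⁻¹Γg] · |N_{K/ℚ}(x)| = [Γ : Γ ∩ gΓg⁻¹]`,
where `Γ = P_𝓞⁺`. -/
theorem modular_function_POplus_PKplus (K : Type*) [Field K] [NumberField K]
    (g : Multiplicative K ⋊[affineAction K] Kˣ) (hg : g ∈ PKplus K) :
    ((((POplus K).map (MulAut.conj g⁻¹).toMonoidHom).relIndex (POplus K) : ℚ))
        * |Algebra.norm ℚ ((g.right : Kˣ) : K)| =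
      (((POplus K).map (MulAut.conj g).toMonoidHom).relIndex (POplus K) : ℚ) := by
  classical
  set π : Multiplicative K ⋊[affineAction K] Kˣ →* Kˣ := SemidirectProduct.rightHom with hπdef
  set cg : Multiplicative K ⋊[affineAction K] Kˣ →* Multiplicative K ⋊[affineAction K] Kˣ :=
    (MulAut.conj g).toMonoidHom with hcg
  set Γ : Subgroup (Multiplicative K ⋊[affineAction K] Kˣ) := POplus K with hΓ
  set Γ' := Γ.map cg with hΓ'
  set x : Kˣ := g.right with hx
  set O := Omul K with hO
  set Ox := O.map (affineAction K x).toMonoidHom with hOx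
  set D := Γ ⊓ Γ' with hD
  -- π is conj-invariant
  have hπconj : ∀ h, π (cg h) = π h := by
    intro h
    rw [hcg, MulEquiv.coe_toMonoidHom, MulAut.conj_apply, map_mul, map_mul, map_inv,
      mul_comm (π g) (π h), mul_assoc, mul_inv_cancel, mul_one]
  have hπcomp : π.comp cg = π := MonoidHom.ext hπconj
  -- LHS subgroup is comap
  have hmapinv : (POplus K).map (MulAut.conj g⁻¹).toMonoidHom = Γ.comap cg := by
    rw [map_inv, MulAut.inv_def, Subgroup.map_equiv_eq_comap_symm', MulEquiv.symm_symm]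
  have hLrel : ((POplus K).map (MulAut.conj g⁻¹).toMonoidHom).relIndex (POplus K)
      = D.relIndex Γ' := by
    rw [hmapinv, ← hΓ, Subgroup.relIndex_comap, ← hΓ', ← Subgroup.inf_relIndex_right Γ Γ', ← hD]
  have hRrel : ((POplus K).map (MulAut.conj g).toMonoidHom).relIndex (POplus K)
      = D.relIndex Γ := by
    rw [← hcg, ← hΓ, ← hΓ', ← Subgroup.inf_relIndex_right Γ' Γ, inf_comm Γ' Γ, ← hD]
  -- kernel computations
  have hkerπ : ∀ p : Multiplicative K ⋊[affineAction K] Kˣ, p ∈ π.ker ↔ p.right = 1 := by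
    intro p
    rw [MonoidHom.mem_ker, hπdef, rightHom]
    exact Iff.rfl
  have hmemΓ : ∀ p : Multiplicative K ⋊[affineAction K] Kˣ,
      p ∈ Γ ↔ IsIntegral ℤ p.left.toAdd ∧ p.right ∈ totallyPositiveIntegerUnits K := by
    intro p; exact Iff.rfl
  have hΓN : Γ ⊓ π.ker = O.map inl := by
    ext p
    simp only [Subgroup.mem_inf, hkerπ, hmemΓ]
    constructor
    · rintro ⟨⟨h1, h2⟩, h3⟩
      refine ⟨p.left, h1, ?_⟩
      conv_rhs => rw [← inl_left_mul_inr_right p]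
      rw [h3, map_one, mul_one]
    · rintro ⟨a, ha, rfl⟩
      exact ⟨⟨by simpa [left_inl, hO, mem_Omul] using ha, by rw [right_inl]; exact one_mem _⟩, right_inl a⟩
  -- conjugation of inl
  have hconjinl : ∀ k : Multiplicative K, cg (inl k) = inl ((affineAction K x) k) := by
    intro k
    rw [hcg, MulEquiv.coe_toMonoidHom, MulAut.conj_apply]
    apply SemidirectProduct.ext
    · show (g * inl k * g⁻¹).left = (inl ((affineAction K x) k)).left
      simp only [mul_left, mul_right, left_inl, right_inl, inv_left, inv_right, mul_one,
        map_inv, MulAut.apply_inv_self]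
      rw [mul_comm g.left (((affineAction K) x) k), mul_assoc, mul_inv_cancel, mul_one]
    · show (g * inl k * g⁻¹).right = (inl ((affineAction K x) k)).right
      simp only [mul_right, right_inl, inv_right, mul_one, mul_inv_cancel]
  have hcompinl : cg.comp inl = (inl : Multiplicative K →* _).comp
      (affineAction K x).toMonoidHom := MonoidHom.ext hconjinl
  -- map cg of kernel
  have hπconjq : ∀ q : Multiplicative K ⋊[affineAction K] Kˣ,
      π.comp (MulAut.conj q).toMonoidHom = π := by
    intro q
    refine MonoidHom.ext fun h => ?_
    rw [MonoidHom.comp_apply, MulEquiv.coe_toMonoidHom, MulAut.conj_apply, map_mul, map_mul,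
      map_inv, mul_comm (π q) (π h), mul_assoc, mul_inv_cancel, mul_one]
  have hkermap : π.ker.map cg = π.ker := by
    rw [hcg, Subgroup.map_equiv_eq_comap_symm']
    have hsymm : (MulAut.conj g).symm.toMonoidHom = (MulAut.conj g⁻¹).toMonoidHom := by
      rw [map_inv, ← MulAut.inv_def]
    rw [hsymm, MonoidHom.comap_ker, hπconjq g⁻¹]
  have hcginj : Function.Injective cg := by rw [hcg]; exact (MulAut.conj g).injective
  have hΓ'N : Γ' ⊓ π.ker = Ox.map inl := by
    rw [hΓ']
    conv_lhs => rw [← hkermap]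
    rw [← Subgroup.map_inf _ _ cg hcginj, hΓN, Subgroup.map_map, hcompinl,
      ← Subgroup.map_map, ← hOx]
  have hDN : D ⊓ π.ker = (O ⊓ Ox).map inl := by
    have h0 : D ⊓ π.ker = (Γ ⊓ π.ker) ⊓ (Γ' ⊓ π.ker) := by
      rw [hD, inf_inf_distrib_right]
    rw [h0, hΓN, hΓ'N, ← Subgroup.map_inf _ _ inl inl_injective]
  have hd1 : D.relIndex Γ' = (D ⊓ π.ker).relIndex (Γ' ⊓ π.ker)
      * ((D.map π).relIndex (Γ'.map π)) := aux_relindex_decomp π Γ' D inf_le_right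
  have hd2 : D.relIndex Γ = (D ⊓ π.ker).relIndex (Γ ⊓ π.ker)
      * ((D.map π).relIndex (Γ.map π)) := aux_relindex_decomp π Γ D inf_le_left
  have hmapπ : Γ'.map π = Γ.map π := by rw [hΓ', Subgroup.map_map, hπcomp]
  have hsval : (D ⊓ π.ker).relIndex (Γ' ⊓ π.ker) = (O ⊓ Ox).relIndex Ox := by
    rw [hDN, hΓ'N, aux_relindex_map_inj inl_injective]
  have hrval : (D ⊓ π.ker).relIndex (Γ ⊓ π.ker) = (O ⊓ Ox).relIndex O := by
    rw [hDN, hΓN, aux_relindex_map_inj inl_injective]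
  rw [hLrel, hRrel, hd1, hd2, hmapπ, hsval, hrval]
  have hkey := key_lattice K x
  rw [← hO] at hkey
  rw [← hOx] at hkey
  push_cast
  calc ((((O ⊓ Ox).relIndex Ox : ℕ) : ℚ)
        * ((D.map π).relIndex (Γ.map π) : ℚ)) * |Algebra.norm ℚ ((x : Kˣ) : K)|
      = (((O ⊓ Ox).relIndex Ox : ℚ)
        * |Algebra.norm ℚ ((x : Kˣ) : K)|) * ((D.map π).relIndex (Γ.map π) : ℚ) := by ring
    _ = ((O ⊓ Ox).relIndex O : ℚ) * ((D.map π).relIndex (Γ.map π) : ℚ) := by rw [hkey]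
end

section
/- Let K be a number field. Inside the topological group A_{K,f}ˣ, the intersection of (the diagonal image of) K*₊ with the closure of (the diagonal image of) 𝓞*_{K,+} equals (the diagonal image of) 𝓞*_{K,+}; that is, a totally positive element x ∈ Kˣ whose image lies in the closure of the group of totally positive units of 𝓞_K is itself a totally positive unit of 𝓞_K. -/
open scoped NumberField
open IsDedekindDomain

section Aux

open IsDedekindDomain IsDedekindDomain.HeightOneSpectrum UniqueFactorizationMonoid nonZeroDivisors

theorem aux_dvd_of_intValuation_le {R : Type*} [CommRing R] [IsDedekindDomain R]
    {a b : R} (hb : b ≠ 0)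
    (h : ∀ v : HeightOneSpectrum R, v.intValuationDef a ≤ v.intValuationDef b) : b ∣ a := by
  classical
  by_cases ha : a = 0
  · simp [ha]
  have hbI : Ideal.span {b} ≠ (0 : Ideal R) := by
    simpa [Ideal.span_singleton_eq_bot] using hb
  have haI : Ideal.span {a} ≠ (0 : Ideal R) := by
    simpa [Ideal.span_singleton_eq_bot] using ha
  rw [← Ideal.span_singleton_le_span_singleton, ← Ideal.dvd_iff_le,
    dvd_iff_normalizedFactors_le_normalizedFactors hbI haI, Multiset.le_iff_count]
  intro P
  by_cases hP : P ∈ normalizedFactors (Ideal.span {b})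
  · have hPprime : Prime P := prime_of_normalized_factor P hP
    have hP0 : P ≠ ⊥ := hPprime.ne_zero
    have hPp : P.IsPrime := Ideal.isPrime_of_prime hPprime
    set v : HeightOneSpectrum R := ⟨P, hPp, hP0⟩ with hv
    have hva := h v
    rw [v.intValuationDef_if_neg ha, v.intValuationDef_if_neg hb] at hva
    have hcount : (Associates.mk P).count (Associates.mk (Ideal.span {b})).factors ≤
        (Associates.mk P).count (Associates.mk (Ideal.span {a})).factors := by
      rw [WithZero.exp_le_exp, neg_le_neg_iff, Nat.cast_le] at hva
      exact hva
    rwa [count_associates_factors_eq hbI hPp hP0,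
      count_associates_factors_eq haI hPp hP0] at hcount
  · simp [Multiset.count_eq_zero_of_notMem hP]

theorem aux_exists_of_valuation_le {R K : Type*} [CommRing R] [IsDedekindDomain R] [Field K]
    [Algebra R K] [IsFractionRing R K] (x : K)
    (h : ∀ v : HeightOneSpectrum R, v.valuation K x ≤ 1) :
    ∃ r : R, algebraMap R K r = x := by
  obtain ⟨⟨a, b⟩, rfl⟩ := IsLocalization.mk'_surjective R⁰ x
  dsimp only at h ⊢
  have hb : (b : R) ≠ 0 := nonZeroDivisors.coe_ne_zero b
  have hint : ∀ v : HeightOneSpectrum R, v.intValuationDef a ≤ v.intValuationDef b := by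
    intro v
    have hv := h v
    rw [valuation_of_mk'] at hv
    have hbv : v.intValuation (b : R) ≠ 0 := v.intValuation_ne_zero _ hb
    rw [div_le_iff₀ (by simpa [pos_iff_ne_zero, zero_lt_iff] using hbv), one_mul] at hv
    exact hv
  obtain ⟨c, hc⟩ := aux_dvd_of_intValuation_le hb hint
  refine ⟨c, ?_⟩
  rw [IsFractionRing.mk'_eq_div, hc, map_mul, mul_comm, mul_div_assoc, div_self, mul_one]
  exact fun h0 => hb (IsFractionRing.to_map_eq_zero_iff.mp h0)

variable {R K : Type*} [CommRing R] [IsDedekindDomain R] [Field K] [Algebra R K]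
  [IsFractionRing R K]

def aux_intSubgroup (R K : Type*) [CommRing R] [IsDedekindDomain R] [Field K] [Algebra R K]
    [IsFractionRing R K] : AddSubgroup (FiniteAdeleRing R K) where
  carrier := {a | ∀ v : HeightOneSpectrum R, a.1 v ∈ v.adicCompletionIntegers K}
  add_mem' ha hb v := add_mem (ha v) (hb v)
  zero_mem' v := zero_mem _
  neg_mem' ha v := neg_mem (ha v)

theorem aux_mem_span_one_iff (a : FiniteAdeleRing R K) :
    a ∈ aux_intSubgroup R K ↔
      ∀ v : HeightOneSpectrum R, a.1 v ∈ v.adicCompletionIntegers K := Iff.rfl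

theorem aux_isClosed_span_one :
    IsClosed ((aux_intSubgroup R K : AddSubgroup _) : Set (FiniteAdeleRing R K)) := by
  have hopen : IsOpen ((aux_intSubgroup R K : AddSubgroup _) : Set (FiniteAdeleRing R K)) :=
    RestrictedProduct.isOpen_forall_mem (fun v => Valued.isOpen_valuationSubring _)
  exact AddSubgroup.isClosed_of_isOpen _ hopen

end Aux

/-- The diagonal embedding `Kˣ → A_{K,f}ˣ` on unit groups. -/
noncomputable def unitsDiagonal (K : Type*) [Field K] [NumberField K] :
    Kˣ →* (FiniteAdeleRing (𝓞 K) K)ˣ :=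
  Units.map (algebraMap K (FiniteAdeleRing (𝓞 K) K)).toMonoidHom

open IsDedekindDomain IsDedekindDomain.HeightOneSpectrum

/-- Inside the topological group `A_{K,f}ˣ`, the intersection of the
diagonal image of `K*₊` with the closure of the diagonal image of `𝓞*_{K,+}` equals
the diagonal image of `𝓞*_{K,+}`. -/
theorem totallyPositive_inter_closure_units (K : Type*) [Field K] [NumberField K] :
    (unitsDiagonal K '' (totallyPositiveUnits K : Set Kˣ)) ∩
        closure (unitsDiagonal K '' (totallyPositiveIntegerUnits K : Set Kˣ)) =
      unitsDiagonal K '' (totallyPositiveIntegerUnits K : Set Kˣ) := by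
  classical
  apply Set.Subset.antisymm
  · rintro x ⟨⟨k, hk, rfl⟩, hcl⟩
    set A := FiniteAdeleRing (𝓞 K) K with hA
    set C : Set A := ((aux_intSubgroup (𝓞 K) K : AddSubgroup A) : Set A) with hC
    have hCclosed : IsClosed C := aux_isClosed_span_one
    have hSclosed : IsClosed ((fun u : Aˣ => (u : A)) ⁻¹' C ∩
        (fun u : Aˣ => ((u⁻¹ : Aˣ) : A)) ⁻¹' C) :=
      (hCclosed.preimage Units.continuous_val).inter
        (hCclosed.preimage Units.continuous_coe_inv)
    have hcomp : ∀ (u : Kˣ) (v : HeightOneSpectrum (𝓞 K)),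
        ((unitsDiagonal K u : Aˣ) : A).1 v = ((u : K) : v.adicCompletion K) := fun _ _ => rfl
    have hcompinv : ∀ (u : Kˣ) (v : HeightOneSpectrum (𝓞 K)),
        (((unitsDiagonal K u)⁻¹ : Aˣ) : A).1 v = (((u⁻¹ : Kˣ) : K) : v.adicCompletion K) :=
      fun _ _ => rfl
    have hintmem : ∀ (z : K), IsIntegral ℤ z → ∀ v : HeightOneSpectrum (𝓞 K),
        ((z : K) : v.adicCompletion K) ∈ v.adicCompletionIntegers K := by
      intro z hz v
      obtain ⟨r, hr⟩ := (IsIntegralClosure.isIntegral_iff (A := 𝓞 K)).mp hz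
      rw [← hr, mem_adicCompletionIntegers, valuedAdicCompletion_eq_valuation']
      exact v.valuation_le_one r
    have hsub : unitsDiagonal K '' (totallyPositiveIntegerUnits K : Set Kˣ) ⊆
        (fun u : Aˣ => (u : A)) ⁻¹' C ∩ (fun u : Aˣ => ((u⁻¹ : Aˣ) : A)) ⁻¹' C := by
      rintro _ ⟨u, hu, rfl⟩
      obtain ⟨hu1, hu2, -⟩ := hu
      constructor
      · show ((unitsDiagonal K u : Aˣ) : A) ∈ C
        rw [hC, SetLike.mem_coe, aux_mem_span_one_iff]
        intro v
        rw [hcomp]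
        exact hintmem _ hu1 v
      · show (((unitsDiagonal K u)⁻¹ : Aˣ) : A) ∈ C
        rw [hC, SetLike.mem_coe, aux_mem_span_one_iff]
        intro v
        rw [hcompinv]
        exact hintmem _ hu2 v
    have hxS := closure_minimal hsub hSclosed hcl
    obtain ⟨hx1, hx2⟩ := hxS
    have hval1 : ∀ v : HeightOneSpectrum (𝓞 K), v.valuation K (k : K) ≤ 1 := by
      intro v
      rw [Set.mem_preimage, hC, SetLike.mem_coe, aux_mem_span_one_iff] at hx1
      have := hx1 v
      rw [hcomp] at this
      rwa [mem_adicCompletionIntegers, valuedAdicCompletion_eq_valuation'] at this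
    have hval2 : ∀ v : HeightOneSpectrum (𝓞 K), v.valuation K ((k⁻¹ : Kˣ) : K) ≤ 1 := by
      intro v
      rw [Set.mem_preimage, hC, SetLike.mem_coe, aux_mem_span_one_iff] at hx2
      have := hx2 v
      rw [hcompinv] at this
      rwa [mem_adicCompletionIntegers, valuedAdicCompletion_eq_valuation'] at this
    obtain ⟨r1, hr1⟩ := aux_exists_of_valuation_le (R := 𝓞 K) (k : K) hval1
    obtain ⟨r2, hr2⟩ := aux_exists_of_valuation_le (R := 𝓞 K) ((k⁻¹ : Kˣ) : K) hval2
    have hkmem : k ∈ totallyPositiveIntegerUnits K := by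
      refine ⟨?_, ?_, hk⟩
      · exact (IsIntegralClosure.isIntegral_iff (A := 𝓞 K)).mpr ⟨r1, hr1⟩
      · exact (IsIntegralClosure.isIntegral_iff (A := 𝓞 K)).mpr ⟨r2, hr2⟩
    exact ⟨k, hkmem, rfl⟩
  · exact Set.subset_inter (Set.image_mono (fun u hu => hu.2.2)) subset_closure
end

section
/- Let K be a number field. Inside the topological group A_{K,f}ˣ, the intersection of the integral unit subgroup Ô_Kˣ with the closure of (the diagonal image of) K*₊ equals the closure of (the diagonal image of) 𝓞*_{K,+}. -/
open scoped NumberField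
open IsDedekindDomain

open IsDedekindDomain

/-- The integral unit group `Ô_Kˣ ⊆ A_{K,f}ˣ`: units `u` such that both `u` and `u⁻¹`
are integral at every finite place. -/
def integralAdeleUnits (K : Type*) [Field K] [NumberField K] :
    Set (FiniteAdeleRing (𝓞 K) K)ˣ :=
  {u | (∀ v : HeightOneSpectrum (𝓞 K),
          (u : FiniteAdeleRing (𝓞 K) K) v ∈ v.adicCompletionIntegers K) ∧
       (∀ v : HeightOneSpectrum (𝓞 K),
          ((u⁻¹ : (FiniteAdeleRing (𝓞 K) K)ˣ) : FiniteAdeleRing (𝓞 K) K) v ∈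
            v.adicCompletionIntegers K)}

/-! ### Auxiliary lemmas -/

section Aux

open scoped nonZeroDivisors
open IsDedekindDomain.HeightOneSpectrum

section Dedekind

variable {R : Type*} [CommRing R] [IsDedekindDomain R] {K : Type*} [Field K]
  [Algebra R K] [IsFractionRing R K]

theorem aux_dvd_of_forall_intValuationDef_le {a b : R} (hb : b ≠ 0)
    (h : ∀ v : HeightOneSpectrum R, v.intValuationDef a ≤ v.intValuationDef b) : b ∣ a := by
  classical
  by_cases ha : a = 0
  · simp [ha]
  have hsa : Ideal.span {a} ≠ (0 : Ideal R) := by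
    simpa [Ideal.zero_eq_bot, Ideal.span_singleton_eq_bot] using ha
  have hsb : Ideal.span {b} ≠ (0 : Ideal R) := by
    simpa [Ideal.zero_eq_bot, Ideal.span_singleton_eq_bot] using hb
  rw [← Ideal.span_singleton_le_span_singleton, ← Ideal.dvd_iff_le,
    UniqueFactorizationMonoid.dvd_iff_normalizedFactors_le_normalizedFactors hsb hsa,
    Multiset.le_iff_count]
  intro p
  by_cases hp : p ∈ UniqueFactorizationMonoid.normalizedFactors (Ideal.span ({b} : Set R))
  · have hprime : Prime p := UniqueFactorizationMonoid.prime_of_normalized_factor p hp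
    set v : HeightOneSpectrum R := ⟨p, Ideal.isPrime_of_prime hprime, hprime.ne_zero⟩ with hv
    have hh := h v
    rw [v.intValuationDef_if_neg ha, v.intValuationDef_if_neg hb, WithZero.exp_le_exp,
      neg_le_neg_iff, Int.ofNat_le] at hh
    rw [← count_associates_factors_eq hsb v.isPrime v.ne_bot,
      ← count_associates_factors_eq hsa v.isPrime v.ne_bot]
    exact hh
  · rw [Multiset.count_eq_zero_of_notMem hp]
    exact Nat.zero_le _

theorem aux_exists_algebraMap_eq_of_forall_valuation_le {x : K}
    (h : ∀ v : HeightOneSpectrum R, v.valuation K x ≤ 1) :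
    ∃ r : R, algebraMap R K r = x := by
  obtain ⟨⟨a, b⟩, rfl⟩ := IsLocalization.mk'_surjective R⁰ x
  have hb : (b : R) ≠ 0 := nonZeroDivisors.coe_ne_zero b
  have key : ∀ v : HeightOneSpectrum R, v.intValuationDef a ≤ v.intValuationDef b := by
    intro v
    have hh := h v
    rw [valuation_of_mk'] at hh
    have hb0 : (0 : WithZero (Multiplicative ℤ)) < v.intValuation (b : R) :=
      v.intValuation_zero_lt b
    rw [div_le_one₀ hb0] at hh
    exact hh
  obtain ⟨c, rfl⟩ := aux_dvd_of_forall_intValuationDef_le hb key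
  refine ⟨c, ?_⟩
  rw [eq_comm, IsLocalization.mk'_eq_iff_eq_mul, map_mul, mul_comm]

/-- The set of finite adeles that are integral everywhere. -/
def auxIntegralAdeles (R : Type*) [CommRing R] [IsDedekindDomain R] (K : Type*) [Field K]
    [Algebra R K] [IsFractionRing R K] : Set (FiniteAdeleRing R K) :=
  {x | ∀ v : HeightOneSpectrum R, x v ∈ v.adicCompletionIntegers K}

variable (R K)

theorem auxIntegralAdeles_isOpen : IsOpen (auxIntegralAdeles R K) :=
  RestrictedProduct.isOpen_forall_mem (fun v => Valued.isOpen_valuationSubring _)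

theorem auxIntegralAdeles_isClosed : IsClosed (auxIntegralAdeles R K) := by
  let H : AddSubgroup (FiniteAdeleRing R K) :=
    { carrier := auxIntegralAdeles R K
      add_mem' := fun ha hb v => add_mem (ha v) (hb v)
      zero_mem' := fun v => (v.adicCompletionIntegers K).zero_mem
      neg_mem' := fun ha v => neg_mem (ha v) }
  exact AddSubgroup.isClosed_of_isOpen H (auxIntegralAdeles_isOpen R K)

end Dedekind

section NF

variable (K : Type*) [Field K] [NumberField K]

theorem integralAdeleUnits_eq_preimage :
    integralAdeleUnits K = ((fun u : (FiniteAdeleRing (𝓞 K) K)ˣ =>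
          (u : FiniteAdeleRing (𝓞 K) K)) ⁻¹' auxIntegralAdeles (𝓞 K) K) ∩
      ((fun u : (FiniteAdeleRing (𝓞 K) K)ˣ =>
          ((u⁻¹ : (FiniteAdeleRing (𝓞 K) K)ˣ) : FiniteAdeleRing (𝓞 K) K)) ⁻¹'
        auxIntegralAdeles (𝓞 K) K) := rfl

theorem isOpen_integralAdeleUnits : IsOpen (integralAdeleUnits K) := by
  rw [integralAdeleUnits_eq_preimage]
  exact (((auxIntegralAdeles_isOpen _ _).preimage Units.continuous_val).inter
    ((auxIntegralAdeles_isOpen _ _).preimage Units.continuous_coe_inv))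

theorem isClosed_integralAdeleUnits : IsClosed (integralAdeleUnits K) := by
  rw [integralAdeleUnits_eq_preimage]
  exact (((auxIntegralAdeles_isClosed _ _).preimage Units.continuous_val).inter
    ((auxIntegralAdeles_isClosed _ _).preimage Units.continuous_coe_inv))

variable {K}

theorem aux_mem_integers_iff_valuation (y : K) (v : HeightOneSpectrum (𝓞 K)) :
    (algebraMap K (FiniteAdeleRing (𝓞 K) K) y) v ∈ v.adicCompletionIntegers K ↔
      v.valuation K y ≤ 1 := by
  letI : Valued K (WithZero (Multiplicative ℤ)) := adicValued v
  rw [FiniteAdeleRing.algebraMap_apply, mem_adicCompletionIntegers,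
    valuedAdicCompletion_eq_valuation']

theorem aux_forall_valuation_le_iff_isIntegral (y : K) :
    (∀ v : HeightOneSpectrum (𝓞 K), v.valuation K y ≤ 1) ↔ IsIntegral ℤ y := by
  constructor
  · intro h
    obtain ⟨r, rfl⟩ := aux_exists_algebraMap_eq_of_forall_valuation_le h
    exact r.2
  · intro hy v
    have h1 : algebraMap (𝓞 K) K ⟨y, hy⟩ = y := rfl
    simpa [h1] using v.valuation_le_one (K := K) (⟨y, hy⟩ : 𝓞 K)

theorem aux_mem_integralAdeleUnits_iff (x : Kˣ) :
    unitsDiagonal K x ∈ integralAdeleUnits K ↔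
      IsIntegral ℤ (x : K) ∧ IsIntegral ℤ ((x⁻¹ : Kˣ) : K) := by
  have h1 : ((unitsDiagonal K x : (FiniteAdeleRing (𝓞 K) K)ˣ) : FiniteAdeleRing (𝓞 K) K) =
      algebraMap K (FiniteAdeleRing (𝓞 K) K) (x : K) := rfl
  have h2 : (((unitsDiagonal K x)⁻¹ : (FiniteAdeleRing (𝓞 K) K)ˣ) : FiniteAdeleRing (𝓞 K) K) =
      algebraMap K (FiniteAdeleRing (𝓞 K) K) ((x⁻¹ : Kˣ) : K) := rfl
  constructor
  · rintro ⟨ha, hb⟩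
    constructor
    · rw [← aux_forall_valuation_le_iff_isIntegral]
      intro v
      rw [← aux_mem_integers_iff_valuation, ← h1]
      exact ha v
    · rw [← aux_forall_valuation_le_iff_isIntegral]
      intro v
      rw [← aux_mem_integers_iff_valuation, ← h2]
      exact hb v
  · rintro ⟨ha, hb⟩
    rw [← aux_forall_valuation_le_iff_isIntegral] at ha hb
    constructor
    · intro v
      have := (aux_mem_integers_iff_valuation (x : K) v).mpr (ha v)
      rwa [← h1] at this
    · intro v
      have := (aux_mem_integers_iff_valuation ((x⁻¹ : Kˣ) : K) v).mpr (hb v)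
      rwa [← h2] at this

end NF

end Aux

/-- Inside `A_{K,f}ˣ`, the intersection of `Ô_Kˣ` with the closure of
the diagonal image of `K*₊` equals the closure of the diagonal image of `𝓞*_{K,+}`. -/
theorem integralUnits_inter_closure_totallyPositive (K : Type*) [Field K] [NumberField K] :
    integralAdeleUnits K ∩
        closure (unitsDiagonal K '' (totallyPositiveUnits K : Set Kˣ)) =
      closure (unitsDiagonal K '' (totallyPositiveIntegerUnits K : Set Kˣ)) := by
  apply Set.Subset.antisymm
  · rintro u ⟨huS, huC⟩
    rw [mem_closure_iff] at huC ⊢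
    intro U hU hUu
    obtain ⟨w, ⟨hwU, hwS⟩, x, hxT, rfl⟩ :=
      huC (U ∩ integralAdeleUnits K) (hU.inter (isOpen_integralAdeleUnits K)) ⟨hUu, huS⟩
    have hxI := (aux_mem_integralAdeleUnits_iff x).mp hwS
    exact ⟨unitsDiagonal K x, hwU, Set.mem_image_of_mem _ ⟨hxI.1, hxI.2, hxT⟩⟩
  · intro u hu
    refine ⟨closure_minimal ?_ (isClosed_integralAdeleUnits K) hu,
      closure_mono (Set.image_mono ?_) hu⟩
    · rintro _ ⟨x, hx, rfl⟩
      exact (aux_mem_integralAdeleUnits_iff x).mpr ⟨hx.1, hx.2.1⟩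
    · intro x hx
      exact hx.2.2
end

section
/- Let K be a number field, A_{K,f} its finite adele ring, with Aˣ = A_{K,f}ˣ its unit group. Let U ≤ Aˣ be the closure of the diagonal image of K*₊ and V = Ô_Kˣ the integral unit subgroup. Let the group U × V act on W = Aˣ × A_{K,f} by (g,h)·(x,y) = (gxh⁻¹, hy), and similarly let V × U act on W by (g,h)·(x,y) = (gxh⁻¹, hy). Then the map φ(x,y) = (x⁻¹, xy) descends to a homeomorphism from the quotient space W/(U × V) onto the quotient space W/(V × U); moreover, this homeomorphism maps the image of Aˣ × Ô_K onto the image of {(x,y) ∈ W : xy ∈ Ô_K}. -/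
open scoped NumberField
open IsDedekindDomain

open IsDedekindDomain

/-- `Ô_Kˣ` as a subgroup of `A_{K,f}ˣ`. -/
def integralAdeleUnitsSubgroup (K : Type*) [Field K] [NumberField K] :
    Subgroup (FiniteAdeleRing (𝓞 K) K)ˣ where
  carrier := integralAdeleUnits K
  one_mem' := ⟨fun v => by exact one_mem (v.adicCompletionIntegers K),
    fun v => by exact one_mem (v.adicCompletionIntegers K)⟩
  mul_mem' {u w} hu hw :=
    ⟨fun v => by rw [Units.val_mul]; exact mul_mem (hu.1 v) (hw.1 v),
     fun v => by rw [mul_inv_rev, Units.val_mul]; exact mul_mem (hw.2 v) (hu.2 v)⟩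
  inv_mem' {u} hu := ⟨hu.2, fun v => by simpa using hu.1 v⟩

/-- The closure of the diagonal image of `K*₊` in `A_{K,f}ˣ`, as a subgroup. -/
noncomputable def closureTotallyPositive (K : Type*) [Field K] [NumberField K] :
    Subgroup (FiniteAdeleRing (𝓞 K) K)ˣ :=
  (Subgroup.map (unitsDiagonal K) (totallyPositiveUnits K)).topologicalClosure

/-- The setoid on `Γ × Y` given by `(x, y) ∼ (g x h⁻¹, h • y)` for `g ∈ U`, `h ∈ V`. -/
def dblSetoid {Γ : Type*} [Group Γ] (Y : Type*) [MulAction Γ Y]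
    (U V : Subgroup Γ) : Setoid (Γ × Y) where
  r p q := ∃ g ∈ U, ∃ h ∈ V, q.1 = g * p.1 * h⁻¹ ∧ q.2 = h • p.2
  iseqv := by
    constructor
    · exact fun p => ⟨1, one_mem U, 1, one_mem V, by simp, by simp⟩
    · rintro p q ⟨g, hg, h, hh, h1, h2⟩
      exact ⟨g⁻¹, inv_mem hg, h⁻¹, inv_mem hh, by rw [h1]; group,
        by rw [h2, inv_smul_smul]⟩
    · rintro p q r ⟨g, hg, h, hh, h1, h2⟩ ⟨g', hg', h', hh', h1', h2'⟩
      exact ⟨g' * g, mul_mem hg' hg, h' * h, mul_mem hh' hh,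
        by rw [h1', h1, mul_inv_rev]; group, by rw [h2', h2, mul_smul]⟩

section Aux

set_option linter.unusedSectionVars false

variable {G Y : Type*} [Group G] [MulAction G Y] [TopologicalSpace G]
  [TopologicalSpace Y] [IsTopologicalGroup G] [ContinuousSMul G Y]

theorem dblSetoid_swap (U V : Subgroup G) (p q : G × Y)
    (hpq : (dblSetoid Y U V).r p q) :
    (dblSetoid Y V U).r (p.1⁻¹, p.1 • p.2) (q.1⁻¹, q.1 • q.2) := by
  obtain ⟨x, y⟩ := p
  obtain ⟨x', y'⟩ := q
  obtain ⟨g, hg, h, hh, h1, h2⟩ := hpq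
  dsimp only at h1 h2 ⊢
  refine ⟨h, hh, g, hg, ?_, ?_⟩
  · rw [h1]; group
  · rw [h1, h2, smul_smul, smul_smul]
    have : g * x * h⁻¹ * h = g * x := by group
    rw [this]

theorem dblSetoid_inv_homeo (U V : Subgroup G) :
    ∃ f : Quotient (dblSetoid Y U V) ≃ₜ Quotient (dblSetoid Y V U),
      ∀ p : G × Y, f (Quotient.mk (dblSetoid Y U V) p) =
        Quotient.mk (dblSetoid Y V U) (p.1⁻¹, p.1 • p.2) := by
  set φ : G × Y → G × Y := fun p => (p.1⁻¹, p.1 • p.2) with hφ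
  have hinv : ∀ p : G × Y, φ (φ p) = p := fun p =>
    Prod.ext (inv_inv _) (inv_smul_smul _ _)
  have hφc : Continuous φ := by
    refine (continuous_inv.comp continuous_fst).prodMk ?_
    exact continuous_fst.smul continuous_snd
  have hUV : Relator.LiftFun ((dblSetoid Y U V).r) ((dblSetoid Y V U).r) φ φ :=
    fun p q h => dblSetoid_swap U V p q h
  have hVU : Relator.LiftFun ((dblSetoid Y V U).r) ((dblSetoid Y U V).r) φ φ :=
    fun p q h => dblSetoid_swap V U p q h
  refine ⟨{ toFun := Quotient.map' φ hUV
            invFun := Quotient.map' φ hVU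
            left_inv := fun q => Quotient.inductionOn' q fun p => by
              show Quotient.mk _ (φ (φ p)) = Quotient.mk _ p
              rw [hinv]
            right_inv := fun q => Quotient.inductionOn' q fun p => by
              show Quotient.mk _ (φ (φ p)) = Quotient.mk _ p
              rw [hinv]
            continuous_toFun := hφc.quotient_map' hUV
            continuous_invFun := hφc.quotient_map' hVU }, fun p => rfl⟩

end Aux

/-- The involution `φ(x, y) = (x⁻¹, xy)` of `A_{K,f}ˣ × A_{K,f}`
descends to a homeomorphism `W/(U × V) → W/(V × U)`, where `U` is the closure of the
diagonal image of `K*₊` and `V = Ô_Kˣ`; it maps the image of `Aˣ × Ô_K` onto the image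
of `{(x, y) : xy ∈ Ô_K}`. -/

theorem involution_descends_to_homeomorph (K : Type*) [Field K] [NumberField K] :
    ∃ f : Quotient (dblSetoid (FiniteAdeleRing (𝓞 K) K)
            (closureTotallyPositive K) (integralAdeleUnitsSubgroup K)) ≃ₜ
          Quotient (dblSetoid (FiniteAdeleRing (𝓞 K) K)
            (integralAdeleUnitsSubgroup K) (closureTotallyPositive K)),
      (∀ p : (FiniteAdeleRing (𝓞 K) K)ˣ × FiniteAdeleRing (𝓞 K) K,
        f (Quotient.mk (dblSetoid (FiniteAdeleRing (𝓞 K) K)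
              (closureTotallyPositive K) (integralAdeleUnitsSubgroup K)) p) =
          Quotient.mk (dblSetoid (FiniteAdeleRing (𝓞 K) K)
              (integralAdeleUnitsSubgroup K) (closureTotallyPositive K))
            (p.1⁻¹, (p.1 : FiniteAdeleRing (𝓞 K) K) * p.2)) ∧
      ⇑f '' (Quotient.mk (dblSetoid (FiniteAdeleRing (𝓞 K) K)
              (closureTotallyPositive K) (integralAdeleUnitsSubgroup K)) ''
          {p : (FiniteAdeleRing (𝓞 K) K)ˣ × FiniteAdeleRing (𝓞 K) K |
            ∀ v : HeightOneSpectrum (𝓞 K), p.2 v ∈ v.adicCompletionIntegers K}) =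
        Quotient.mk (dblSetoid (FiniteAdeleRing (𝓞 K) K)
            (integralAdeleUnitsSubgroup K) (closureTotallyPositive K)) ''
          {p : (FiniteAdeleRing (𝓞 K) K)ˣ × FiniteAdeleRing (𝓞 K) K |
            ∀ v : HeightOneSpectrum (𝓞 K),
              ((p.1 : FiniteAdeleRing (𝓞 K) K) * p.2) v ∈ v.adicCompletionIntegers K} := by
  obtain ⟨f, hf⟩ := dblSetoid_inv_homeo (Y := FiniteAdeleRing (𝓞 K) K)
    (closureTotallyPositive K) (integralAdeleUnitsSubgroup K)
  have hsmul : ∀ (u : (FiniteAdeleRing (𝓞 K) K)ˣ) (a : FiniteAdeleRing (𝓞 K) K),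
      u • a = (u : FiniteAdeleRing (𝓞 K) K) * a := fun u a => rfl
  refine ⟨f, fun p => by rw [hf p, hsmul], ?_⟩
  have hcomp : ⇑f ∘ Quotient.mk (dblSetoid (FiniteAdeleRing (𝓞 K) K)
      (closureTotallyPositive K) (integralAdeleUnitsSubgroup K)) =
      Quotient.mk (dblSetoid (FiniteAdeleRing (𝓞 K) K)
        (integralAdeleUnitsSubgroup K) (closureTotallyPositive K)) ∘
        (fun p => (p.1⁻¹, p.1 • p.2)) := funext fun p => hf p
  have hST : (fun p : (FiniteAdeleRing (𝓞 K) K)ˣ × FiniteAdeleRing (𝓞 K) K =>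
        (p.1⁻¹, p.1 • p.2)) ''
      {p : (FiniteAdeleRing (𝓞 K) K)ˣ × FiniteAdeleRing (𝓞 K) K |
        ∀ v : HeightOneSpectrum (𝓞 K), p.2 v ∈ v.adicCompletionIntegers K} =
      {p : (FiniteAdeleRing (𝓞 K) K)ˣ × FiniteAdeleRing (𝓞 K) K |
        ∀ v : HeightOneSpectrum (𝓞 K),
          ((p.1 : FiniteAdeleRing (𝓞 K) K) * p.2) v ∈ v.adicCompletionIntegers K} := by
    ext ⟨x, y⟩
    constructor
    · rintro ⟨⟨x', y'⟩, hS, hxy⟩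
      rw [Prod.ext_iff] at hxy
      obtain ⟨hx, hy⟩ := hxy
      dsimp only at hx hy
      intro v
      have hkey : (x : FiniteAdeleRing (𝓞 K) K) * y = y' := by
        rw [← hx, ← hy, hsmul]
        exact Units.inv_mul_cancel_left x' y'
      rw [Set.mem_setOf_eq] at hS
      show ((x : FiniteAdeleRing (𝓞 K) K) * y) v ∈ _
      rw [hkey]
      exact hS v
    · intro hT
      rw [Set.mem_setOf_eq] at hT
      refine ⟨(x⁻¹, x • y), fun v => ?_, ?_⟩
      · show (x • y : FiniteAdeleRing (𝓞 K) K) v ∈ _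
        rw [hsmul]
        exact hT v
      · show ((x⁻¹)⁻¹, x⁻¹ • x • y) = (x, y)
        exact Prod.ext (inv_inv x) (inv_smul_smul x y)
  rw [← Set.image_comp, hcomp, Set.image_comp, hST]
end

section
/- Let K be a number field. The subgroup 𝒫_{K,+} of the group J_K of invertible fractional ideals of 𝓞_K consisting of the principal fractional ideals x𝓞_K generated by totally positive elements x ∈ K*₊ has finite index in J_K; that is, the narrow class group J_K/𝒫_{K,+} is finite. -/
open scoped NumberField

open scoped nonZeroDivisors

/-- The subgroup `𝒫_{K,+}` of invertible fractional ideals generated by a totally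
positive element. -/
noncomputable def narrowPrincipalIdeals (K : Type*) [Field K] [NumberField K] :
    Subgroup (FractionalIdeal (𝓞 K)⁰ K)ˣ :=
  Subgroup.map (toPrincipalIdeal (𝓞 K) K) (totallyPositiveUnits K)


/-- Sign homomorphism on real units. -/
noncomputable def realUnitsSign : ℝˣ →* ℤˣ where
  toFun u := if 0 < (u : ℝ) then 1 else -1
  map_one' := by simp
  map_mul' u v := by
    rcases lt_trichotomy (0 : ℝ) (u : ℝ) with hu | hu | hu
    · rcases lt_trichotomy (0 : ℝ) (v : ℝ) with hv | hv | hv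
      · simp [hu, hv, Units.val_mul, mul_pos hu hv]
      · exact absurd hv.symm v.ne_zero
      · have : ¬ (0 : ℝ) < (u * v : ℝˣ) := by
          rw [Units.val_mul]
          exact not_lt.2 (mul_nonpos_of_nonneg_of_nonpos hu.le hv.le)
        simp [hu, hv.asymm, this]
    · exact absurd hu u.ne_zero.symm
    · rcases lt_trichotomy (0 : ℝ) (v : ℝ) with hv | hv | hv
      · have : ¬ (0 : ℝ) < (u * v : ℝˣ) := by
          rw [Units.val_mul]
          exact not_lt.2 (mul_nonpos_of_nonpos_of_nonneg hu.le hv.le)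
        simp [hu.asymm, hv, this]
      · exact absurd hv.symm v.ne_zero
      · have : (0 : ℝ) < (u * v : ℝˣ) := by
          rw [Units.val_mul]; exact mul_pos_of_neg_of_neg hu hv
        simp only [hu.asymm, hv.asymm, if_false, Units.val_mul] at this ⊢
        simp [this]

lemma realUnitsSign_eq_one_iff (u : ℝˣ) : realUnitsSign u = 1 ↔ 0 < (u : ℝ) := by
  unfold realUnitsSign
  by_cases h : 0 < (u : ℝ) <;> simp [h]

/-- The total sign homomorphism of a number field. -/
noncomputable def totalSignHom (K : Type*) [Field K] : Kˣ →* ((K →+* ℝ) → ℤˣ) where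
  toFun x := fun φ => realUnitsSign (Units.map φ.toMonoidHom x)
  map_one' := by funext φ; simp
  map_mul' x y := by funext φ; simp [map_mul]

lemma totallyPositiveUnits_eq_ker (K : Type*) [Field K] :
    totallyPositiveUnits K = (totalSignHom K).ker := by
  ext x
  simp only [totallyPositiveUnits, Subgroup.mem_mk, Set.mem_setOf_eq,
    MonoidHom.mem_ker, totalSignHom, MonoidHom.coe_mk, OneHom.coe_mk, funext_iff,
    Pi.one_apply, realUnitsSign_eq_one_iff]
  rfl

lemma finite_quotient_totallyPositiveUnits (K : Type*) [Field K] [NumberField K] :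
    Finite (Kˣ ⧸ totallyPositiveUnits K) := by
  rw [totallyPositiveUnits_eq_ker]
  have : Finite ((K →+* ℝ) → ℤˣ) := by infer_instance
  exact Finite.of_injective _ (QuotientGroup.kerLift_injective (totalSignHom K))

/-- The narrow class group `J_K/𝒫_{K,+}` of a number field is
finite. -/
theorem narrowClassGroup_finite (K : Type*) [Field K] [NumberField K] :
    Finite ((FractionalIdeal (𝓞 K)⁰ K)ˣ ⧸ narrowPrincipalIdeals K) := by
  set P := (toPrincipalIdeal (𝓞 K) K).range with hP
  have hle : narrowPrincipalIdeals K ≤ P := Subgroup.map_le_range _ _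
  -- J/P is finite (class group finiteness)
  have hfinP : Finite ((FractionalIdeal (𝓞 K)⁰ K)ˣ ⧸ P) :=
    Finite.of_equiv _ (ClassGroup.equiv K).toEquiv
  have hPfi : P.FiniteIndex := Subgroup.finiteIndex_of_finite_quotient (H := P)
  -- P / narrow is finite, being a quotient of Kˣ / K₊
  have hsurj : Function.Surjective ((toPrincipalIdeal (𝓞 K) K).rangeRestrict) :=
    MonoidHom.rangeRestrict_surjective _
  set N' := (narrowPrincipalIdeals K).subgroupOf P with hN'
  have hker : totallyPositiveUnits K ≤
      ((QuotientGroup.mk' N').comp ((toPrincipalIdeal (𝓞 K) K).rangeRestrict)).ker := by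
    intro x hx
    rw [MonoidHom.mem_ker, MonoidHom.comp_apply, QuotientGroup.mk'_apply,
      QuotientGroup.eq_one_iff]
    exact Subgroup.mem_subgroupOf.2 ⟨x, hx, rfl⟩
  have hfinPN : Finite (P ⧸ N') := by
    have := finite_quotient_totallyPositiveUnits K
    refine Finite.of_surjective
      (QuotientGroup.lift (totallyPositiveUnits K) _ hker) ?_
    intro y
    obtain ⟨x, hx⟩ := (QuotientGroup.mk'_surjective N').comp hsurj y
    exact ⟨QuotientGroup.mk x, hx⟩
  have hN'fi : N'.FiniteIndex := Subgroup.finiteIndex_of_finite_quotient (H := N')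
  have hidx : (narrowPrincipalIdeals K).index ≠ 0 := by
    rw [← Subgroup.relIndex_mul_index hle]
    exact mul_ne_zero hN'fi.index_ne_zero hPfi.index_ne_zero
  have : (narrowPrincipalIdeals K).FiniteIndex := ⟨hidx⟩
  infer_instance
end

section
/- Let K be a number field. For every function ε from the set of ring embeddings φ : K → ℝ to {+1, −1}, there exists x ∈ Kˣ such that for every ring embedding φ : K → ℝ the sign of φ(x) equals ε(φ). -/
/-- In a number field `K`, every prescribed choice of signs at the
real embeddings is realized by a nonzero element: for every `ε : (K →+* ℝ) → ℝ` with
values in `{1, -1}` there is `x ∈ Kˣ` with `sign (φ x) = ε φ` for all real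
embeddings `φ`. -/
theorem exists_element_with_prescribed_signs (K : Type*) [Field K] [NumberField K]
    (ε : (K →+* ℝ) → ℝ) (hε : ∀ φ : K →+* ℝ, ε φ = 1 ∨ ε φ = -1) :
    ∃ x : K, x ≠ 0 ∧ ∀ φ : K →+* ℝ, Real.sign (φ x) = ε φ := by
  classical
  by_cases hne : Nonempty (K →+* ℝ)
  swap
  · exact ⟨1, one_ne_zero, fun φ => absurd ⟨φ⟩ hne⟩
  -- the evaluation map into the product over all real embeddings
  set F : K → ((K →+* ℝ) → ℝ) := fun x φ => φ x with hF
  -- Dedekind's linear independence of characters gives that the range of `F` spans everything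
  have hspan : Submodule.span ℝ (Set.range F) = ⊤ := by
    by_contra h
    obtain ⟨f, hf0, hfbot⟩ :=
      Submodule.exists_dual_map_eq_bot_of_lt_top (lt_top_iff_ne_top.mpr h) inferInstance
    set c : (K →+* ℝ) → ℝ := fun φ => f (Pi.single φ 1) with hc
    have hval : ∀ v : (K →+* ℝ) → ℝ, f v = ∑ φ, v φ * c φ := by
      intro v
      conv_lhs => rw [pi_eq_sum_univ v]
      rw [map_sum]
      simp only [map_smul, smul_eq_mul]
      refine Finset.sum_congr rfl fun x _ => ?_
      congr 2
      ext j
      simp [Pi.single_apply, eq_comm]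
    have hker : ∀ x : K, f (F x) = 0 := by
      intro x
      have hmem : f (F x) ∈ Submodule.map f (Submodule.span ℝ (Set.range F)) :=
        Submodule.mem_map_of_mem (Submodule.subset_span ⟨x, rfl⟩)
      rw [hfbot] at hmem
      exact hmem
    have li : LinearIndependent ℝ (fun φ : (K →+* ℝ) => ((φ : K →* ℝ) : K → ℝ)) := by
      refine (linearIndependent_monoidHom K ℝ).comp
        (fun φ : (K →+* ℝ) => (φ : K →* ℝ)) ?_
      intro φ ψ h
      exact RingHom.ext fun x => DFunLike.congr_fun h x
    have hc0 : ∀ φ : (K →+* ℝ), c φ = 0 := by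
      have hsum : ∑ φ : (K →+* ℝ), c φ • ((φ : K →* ℝ) : K → ℝ) = 0 := by
        funext x
        have hx := hker x
        rw [hval] at hx
        simpa [Finset.sum_apply, F, mul_comm] using hx
      exact Fintype.linearIndependent_iff.mp li c hsum
    apply hf0
    apply LinearMap.ext
    intro v
    rw [hval]
    simp [hc0]
  -- write `ε` as a real linear combination of values of `F`
  have hε_mem : ε ∈ Submodule.span ℝ (Set.range F) := hspan ▸ Submodule.mem_top
  obtain ⟨n, a, v, hsum⟩ := Submodule.mem_span_set'.mp hε_mem
  choose y hy using fun i => (v i).2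
  -- approximate the real coefficients by rationals
  have hδ : ∀ i : Fin n, 0 < (1 / (n + 1 : ℝ)) / (‖F (y i)‖ + 1) := by
    intro i
    apply div_pos
    · positivity
    · positivity
  choose q hq using fun i => exists_rat_near (a i) (hδ i)
  refine ⟨∑ i, (q i : K) * y i, ?_, ?_⟩
  all_goals
    have key : ∀ φ : K →+* ℝ, |φ (∑ i, (q i : K) * y i) - ε φ| < 1 := by
      intro φ
      have h1 : φ (∑ i, (q i : K) * y i) = ∑ i, (q i : ℝ) * φ (y i) := by
        rw [map_sum]
        simp [map_mul]
      have h2 : ε φ = ∑ i, a i * φ (y i) := by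
        have hφ := congrFun hsum φ
        simp only [Finset.sum_apply, Pi.smul_apply, smul_eq_mul] at hφ
        rw [← hφ]
        refine Finset.sum_congr rfl fun i _ => ?_
        rw [← hy i]
      rw [h1, h2, ← Finset.sum_sub_distrib]
      have step : ∀ i : Fin n, |(q i : ℝ) * φ (y i) - a i * φ (y i)| ≤ 1 / (n + 1 : ℝ) := by
        intro i
        rw [← sub_mul, abs_mul]
        have hb1 : |(q i : ℝ) - a i| ≤ (1 / (n + 1 : ℝ)) / (‖F (y i)‖ + 1) := by
          rw [abs_sub_comm]
          exact (hq i).le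
        have hb2 : |φ (y i)| ≤ ‖F (y i)‖ + 1 := by
          have := norm_le_pi_norm (F (y i)) φ
          rw [Real.norm_eq_abs] at this
          calc |φ (y i)| = |F (y i) φ| := rfl
            _ ≤ ‖F (y i)‖ := this
            _ ≤ ‖F (y i)‖ + 1 := by linarith
        calc |(q i : ℝ) - a i| * |φ (y i)|
            ≤ ((1 / (n + 1 : ℝ)) / (‖F (y i)‖ + 1)) * (‖F (y i)‖ + 1) := by
              apply mul_le_mul hb1 hb2 (abs_nonneg _)
              positivity
          _ = 1 / (n + 1 : ℝ) := by
              field_simp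
      calc |∑ i, ((q i : ℝ) * φ (y i) - a i * φ (y i))|
          ≤ ∑ i : Fin n, |(q i : ℝ) * φ (y i) - a i * φ (y i)| := Finset.abs_sum_le_sum_abs _ _
        _ ≤ ∑ _i : Fin n, 1 / (n + 1 : ℝ) := Finset.sum_le_sum fun i _ => step i
        _ = n * (1 / (n + 1 : ℝ)) := by
              rw [Finset.sum_const, Finset.card_univ, Fintype.card_fin, nsmul_eq_mul]
        _ < 1 := by
              rw [mul_one_div, div_lt_one (by positivity)]
              linarith
  · -- nonzero
    obtain ⟨φ⟩ := hne
    intro h0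
    have := key φ
    rw [h0, map_zero, zero_sub, abs_neg] at this
    rcases hε φ with h1 | h1 <;> rw [h1] at this <;> norm_num at this
  · -- the signs
    intro φ
    have := abs_lt.mp (key φ)
    rcases hε φ with h1 | h1 <;> rw [h1] <;> rw [h1] at this
    · exact Real.sign_of_pos (by linarith [this.1])
    · exact Real.sign_of_neg (by linarith [this.2])
end

section
/- For all real numbers x > 1, s ≥ 1, and a with 0 ≤ a ≤ 1, the function β ↦ (1 − a·x^{−sβ})/(1 − x^{−β}) is non-increasing on (0, ∞). -/
open Real

/-- Bernoulli-type inequality: for `0 < t < 1` and `1 ≤ s`,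
`t * t^s + s * t^s * (1 - t) ≤ t`. -/
lemma key_ineq (t s : ℝ) (ht : 0 < t) (ht1 : t < 1) (hs : 1 ≤ s) :
    t * t ^ s + s * t ^ s * (1 - t) ≤ t := by
  have hinv : -1 ≤ t⁻¹ - 1 := by
    have : 0 < t⁻¹ := inv_pos.mpr ht
    linarith
  have hb := one_add_mul_self_le_rpow_one_add hinv hs
  have h1 : (1 + (t⁻¹ - 1)) = t⁻¹ := by ring
  rw [h1, Real.inv_rpow ht.le] at hb
  have hu : 0 < t ^ s := Real.rpow_pos_of_pos ht s
  have h2 : (t ^ s) * (1 + s * (t⁻¹ - 1)) ≤ 1 := by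
    have := mul_le_mul_of_nonneg_left hb hu.le
    rwa [mul_inv_cancel₀ hu.ne'] at this
  have h3 := mul_le_mul_of_nonneg_left h2 ht.le
  have e : t * (t ^ s * (1 + s * (t⁻¹ - 1))) = t * t ^ s + s * t ^ s * (1 - t) := by
    field_simp
  rw [e] at h3
  linarith

/-- For real `x > 1`, `s ≥ 1` and `0 ≤ a ≤ 1`, the function
`β ↦ (1 - a x^{-sβ})/(1 - x^{-β})` is non-increasing on `(0, ∞)`. -/
theorem antitoneOn_ratio (x s a : ℝ) (hx : 1 < x) (hs : 1 ≤ s) (ha0 : 0 ≤ a)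
    (ha1 : a ≤ 1) :
    AntitoneOn (fun β : ℝ => (1 - a * x ^ (-(s * β))) / (1 - x ^ (-β)))
      (Set.Ioi (0 : ℝ)) := by
  have hx0 : (0 : ℝ) < x := lt_trans one_pos hx
  have hL : 0 < Real.log x := Real.log_pos hx
  -- the derivative at each β > 0
  have hderiv : ∀ β : ℝ, 0 < β →
      HasDerivAt (fun β : ℝ => (1 - a * x ^ (-(s * β))) / (1 - x ^ (-β)))
        ((-(a * ((x ^ (-(s * β)) * Real.log x) * (-s))) * (1 - x ^ (-β)) -
          (1 - a * x ^ (-(s * β))) * (-((x ^ (-β) * Real.log x) * (-1)))) /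
          (1 - x ^ (-β)) ^ 2) β := by
    intro β hβ
    have hDne : 1 - x ^ (-β) ≠ 0 := by
      have : x ^ (-β) < 1 :=
        Real.rpow_lt_one_of_one_lt_of_neg hx (by linarith)
      linarith
    have h1 : HasDerivAt (fun β : ℝ => -(s * β)) (-s) β := by
      simpa [Pi.neg_def] using ((hasDerivAt_id β).const_mul s).neg
    have h2 : HasDerivAt (fun β : ℝ => x ^ (-(s * β)))
        ((x ^ (-(s * β)) * Real.log x) * (-s)) β :=
      (Real.hasStrictDerivAt_const_rpow hx0 (-(s * β))).hasDerivAt.comp β h1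
    have hN : HasDerivAt (fun β : ℝ => 1 - a * x ^ (-(s * β)))
        (-(a * ((x ^ (-(s * β)) * Real.log x) * (-s)))) β :=
      (h2.const_mul a).const_sub 1
    have h3 : HasDerivAt (fun β : ℝ => -β) (-1 : ℝ) β := by
      simpa [Pi.neg_def] using (hasDerivAt_id β).neg
    have h4 : HasDerivAt (fun β : ℝ => x ^ (-β))
        ((x ^ (-β) * Real.log x) * (-1)) β :=
      (Real.hasStrictDerivAt_const_rpow hx0 (-β)).hasDerivAt.comp β h3
    have hD : HasDerivAt (fun β : ℝ => 1 - x ^ (-β))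
        (-((x ^ (-β) * Real.log x) * (-1))) β :=
      h4.const_sub 1
    exact hN.div hD hDne
  apply antitoneOn_of_deriv_nonpos (convex_Ioi 0)
  · intro β hβ
    exact (hderiv β hβ).continuousAt.continuousWithinAt
  · rw [interior_Ioi]
    intro β hβ
    exact (hderiv β hβ).differentiableAt.differentiableWithinAt
  · rw [interior_Ioi]
    intro β hβ
    rw [(hderiv β hβ).deriv]
    have hβ' : (0:ℝ) < β := hβ
    set t : ℝ := x ^ (-β) with htdef
    have ht : 0 < t := Real.rpow_pos_of_pos hx0 _
    have ht1 : t < 1 := Real.rpow_lt_one_of_one_lt_of_neg hx (by linarith)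
    have hts : x ^ (-(s * β)) = t ^ s := by
      rw [htdef, ← Real.rpow_mul hx0.le]
      congr 1
      ring
    rw [hts]
    have hu : 0 < t ^ s := Real.rpow_pos_of_pos ht s
    have h5 : a * s * t ^ s * (1 - t) - (1 - a * t ^ s) * t ≤ 0 := by
      nlinarith [mul_le_mul_of_nonneg_left (key_ineq t s ht ht1 hs) ha0,
        mul_nonneg (sub_nonneg.mpr ha1) ht.le]
    have hnum : -(a * ((t ^ s * Real.log x) * (-s))) * (1 - t) -
        (1 - a * t ^ s) * (-((t * Real.log x) * (-1))) ≤ 0 := by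
      have h6 := mul_nonneg hL.le
        (by linarith : 0 ≤ (1 - a * t ^ s) * t - a * s * t ^ s * (1 - t))
      nlinarith [h6]
    exact div_nonpos_of_nonpos_of_nonneg hnum (sq_nonneg _)
end

section
/- Let n ≥ 1 and let x₁, …, x_n > 1 and s₁, …, s_n ≥ 1 be real numbers. Then the function β ↦ (1 − ∏_{i=1}^{n} x_i^{−s_iβ}) / ∏_{i=1}^{n} (1 − x_i^{−β}) is non-increasing on the interval (0, 1]. -/
open Finset

/-- Monotonicity of the secant slope `a ↦ (1 - a^c)/(1 - a)` for `c ≥ 1`. -/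
lemma g_mono {c a b : ℝ} (hc : 1 ≤ c) (hb : 0 ≤ b) (hba : b ≤ a) (ha : a < 1) :
    (1 - b ^ c) / (1 - b) ≤ (1 - a ^ c) / (1 - a) := by
  have h := (convexOn_rpow hc).secant_mono (a := 1) (x := b) (y := a)
    (Set.mem_Ici.mpr zero_le_one) (Set.mem_Ici.mpr hb)
    (Set.mem_Ici.mpr (hb.trans hba)) (by linarith) (by linarith) hba
  simp only [Real.one_rpow] at h
  have e1 : (b ^ c - 1) / (b - 1) = (1 - b ^ c) / (1 - b) := by
    rw [← neg_div_neg_eq]; ring_nf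
  have e2 : (a ^ c - 1) / (a - 1) = (1 - a ^ c) / (1 - a) := by
    rw [← neg_div_neg_eq]; ring_nf
  rwa [e1, e2] at h

lemma g_ge_one {c a : ℝ} (hc : 1 ≤ c) (ha : 0 < a) (ha1 : a < 1) :
    1 ≤ (1 - a ^ c) / (1 - a) := by
  have h1 : a ^ c ≤ a := by
    nth_rewrite 2 [← Real.rpow_one a]
    exact Real.rpow_le_rpow_of_exponent_ge ha ha1.le hc
  rw [le_div_iff₀ (by linarith)]
  linarith

/-- For `n ≥ 1`, reals `x i > 1` and `s i ≥ 1`, the function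
`β ↦ (1 - ∏ i, x i ^ (-s i β)) / ∏ i, (1 - x i ^ (-β))` is non-increasing on `(0, 1]`. -/
theorem antitoneOn_product_ratio (n : ℕ) (hn : 1 ≤ n) (x s : Fin n → ℝ)
    (hx : ∀ i, 1 < x i) (hs : ∀ i, 1 ≤ s i) :
    AntitoneOn
      (fun β : ℝ => (1 - ∏ i, x i ^ (-(s i * β))) / ∏ i, (1 - x i ^ (-β)))
      (Set.Ioc (0 : ℝ) 1) := by
  intro β₁ hβ₁ β₂ hβ₂ h12
  obtain ⟨hβ₁0, hβ₁1⟩ := hβ₁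
  obtain ⟨hβ₂0, hβ₂1⟩ := hβ₂
  set c : ℝ := β₂ / β₁ with hc_def
  have hc : 1 ≤ c := (one_le_div hβ₁0).mpr h12
  have hc0 : 0 < c := lt_of_lt_of_le one_pos hc
  have hβ₂c : β₂ = β₁ * c := by rw [hc_def, mul_div_cancel₀ _ hβ₁0.ne']
  have hx0 : ∀ i, (0:ℝ) < x i := fun i => lt_trans one_pos (hx i)
  set a : Fin n → ℝ := fun i => x i ^ (-β₁) with ha_def
  set u : Fin n → ℝ := fun i => x i ^ (-(s i * β₁)) with hu_def
  have ha_pos : ∀ i, 0 < a i := fun i => Real.rpow_pos_of_pos (hx0 i) _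
  have ha_lt1 : ∀ i, a i < 1 := fun i =>
    Real.rpow_lt_one_of_one_lt_of_neg (hx i) (by linarith)
  have hu_pos : ∀ i, 0 < u i := fun i => Real.rpow_pos_of_pos (hx0 i) _
  have hu_le_a : ∀ i, u i ≤ a i := fun i => by
    apply Real.rpow_le_rpow_of_exponent_le (hx i).le
    have := hs i
    nlinarith
  -- denominators
  set D₁ : ℝ := ∏ i, (1 - a i) with hD₁
  set D₂ : ℝ := ∏ i, (1 - a i ^ c) with hD₂
  have hac_lt1 : ∀ i, a i ^ c < 1 :=
    fun i => Real.rpow_lt_one (ha_pos i).le (ha_lt1 i) hc0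
  have hD₁0 : 0 < D₁ := Finset.prod_pos fun i _ => by linarith [ha_lt1 i]
  have hD₂0 : 0 < D₂ := Finset.prod_pos fun i _ => by linarith [hac_lt1 i]
  -- numerators
  set P : ℝ := ∏ i, u i with hP
  have hP0 : 0 < P := Finset.prod_pos fun i _ => hu_pos i
  have i0 : Fin n := ⟨0, hn⟩
  have hP_le : P ≤ a i0 := by
    have h1 : P = u i0 * ∏ i ∈ Finset.univ.erase i0, u i :=
      (Finset.mul_prod_erase Finset.univ u (Finset.mem_univ i0)).symm
    have h2 : ∏ i ∈ Finset.univ.erase i0, u i ≤ 1 :=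
      Finset.prod_le_one (fun i _ => (hu_pos i).le)
        (fun i _ => le_of_lt (lt_of_le_of_lt (hu_le_a i) (ha_lt1 i)))
    calc P ≤ u i0 := by
            rw [h1]; exact mul_le_of_le_one_right (hu_pos i0).le h2
      _ ≤ a i0 := hu_le_a i0
  have hP1 : P < 1 := lt_of_le_of_lt hP_le (ha_lt1 i0)
  -- rewrite the β₂ expression in terms of c-th powers
  have hrw_den : ∀ i, x i ^ (-β₂) = a i ^ c := fun i => by
    rw [ha_def]
    rw [show -β₂ = -β₁ * c by rw [hβ₂c]; ring, Real.rpow_mul (hx0 i).le]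
  have hrw_num : ∀ i, x i ^ (-(s i * β₂)) = u i ^ c := fun i => by
    rw [hu_def]
    rw [show -(s i * β₂) = -(s i * β₁) * c by rw [hβ₂c]; ring,
      Real.rpow_mul (hx0 i).le]
  have hProdPow : ∏ i, u i ^ c = P ^ c := by
    rw [hP, ← Real.finset_prod_rpow _ _ (fun i _ => (hu_pos i).le)]
  simp only [hrw_den, hrw_num, hProdPow]
  -- main inequality: (1 - P^c)/D₂ ≤ (1 - P)/D₁
  show (1 - P ^ c) / D₂ ≤ (1 - P) / D₁
  have key : (1 - P ^ c) / (1 - P) ≤ D₂ / D₁ := by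
    have h1 : (1 - P ^ c) / (1 - P) ≤ (1 - a i0 ^ c) / (1 - a i0) :=
      g_mono hc hP0.le hP_le (ha_lt1 i0)
    have h2 : (1 - a i0 ^ c) / (1 - a i0) ≤ ∏ i, (1 - a i ^ c) / (1 - a i) := by
      rw [← Finset.mul_prod_erase Finset.univ
        (fun i => (1 - a i ^ c) / (1 - a i)) (Finset.mem_univ i0)]
      have hone : (1:ℝ) ≤ ∏ i ∈ Finset.univ.erase i0, (1 - a i ^ c) / (1 - a i) := by
        calc (1:ℝ) = ∏ _i ∈ Finset.univ.erase i0, (1:ℝ) := by simp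
          _ ≤ _ := Finset.prod_le_prod (fun i _ => zero_le_one)
              (fun i _ => g_ge_one hc (ha_pos i) (ha_lt1 i))
      have hpos : (0:ℝ) ≤ (1 - a i0 ^ c) / (1 - a i0) :=
        le_trans zero_le_one (g_ge_one hc (ha_pos i0) (ha_lt1 i0))
      exact le_mul_of_one_le_right hpos hone
    have h3 : ∏ i, (1 - a i ^ c) / (1 - a i) = D₂ / D₁ := by
      rw [hD₁, hD₂, ← Finset.prod_div_distrib]
    linarith [h1, h2.trans_eq h3]
  rw [div_le_div_iff₀ (by linarith : (0:ℝ) < 1 - P) hD₁0] at key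
  rw [div_le_div_iff₀ hD₂0 hD₁0]
  nlinarith [key]
end

section
/- Let L/K be an extension of number fields with n = [L:K], and let 𝔭 be a nonzero prime ideal of 𝓞_K. Then the function β ↦ (1 − N_K(𝔭)^{−nβ}) / ∏_{𝔮 | 𝔭𝓞_L} (1 − N_L(𝔮)^{−β}), where the product is over the nonzero prime ideals 𝔮 of 𝓞_L dividing 𝔭𝓞_L, is non-increasing on the interval (0, 1]. -/
open scoped NumberField

section AuxLemmas
open Real Set


lemma aux_slope {s t : ℝ} (hs : 0 < s) (hst : s ≤ t) :
    t * (Real.exp s - 1) ≤ s * (Real.exp t - 1) := by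
  have ht : 0 < t := hs.trans_le hst
  have h := convexOn_exp.secant_mono (Set.mem_univ 0) (Set.mem_univ s) (Set.mem_univ t)
    hs.ne' ht.ne' hst
  simp only [Real.exp_zero, sub_zero] at h
  rw [div_le_div_iff₀ hs ht] at h
  nlinarith [h]

lemma aux_ratio_exp {c d : ℝ} (hd : 0 < d) (hdc : d ≤ c) :
    AntitoneOn (fun β : ℝ => (1 - Real.exp (-(c * β))) / (1 - Real.exp (-(d * β))))
      (Set.Ioi 0) := by
  have hc : 0 < c := hd.trans_le hdc
  have hden : ∀ x ∈ Set.Ioi (0:ℝ), (1 - Real.exp (-(d * x))) ≠ 0 := by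
    intro x hx
    simp only [Set.mem_Ioi] at hx
    have : Real.exp (-(d * x)) < 1 := Real.exp_lt_one_iff.mpr (by nlinarith)
    linarith
  have hnum : ∀ x : ℝ, HasDerivAt (fun β : ℝ => 1 - Real.exp (-(c * β)))
      (Real.exp (-(c * x)) * c) x := by
    intro x
    have h1 : HasDerivAt (fun β : ℝ => -(c * β)) (-c) x := by
      simpa [Pi.neg_def] using ((hasDerivAt_id x).const_mul c).neg
    have := (h1.exp).const_sub 1
    simpa using this.congr_deriv (by ring)
  have hden' : ∀ x : ℝ, HasDerivAt (fun β : ℝ => 1 - Real.exp (-(d * β)))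
      (Real.exp (-(d * x)) * d) x := by
    intro x
    have h1 : HasDerivAt (fun β : ℝ => -(d * β)) (-d) x := by
      simpa [Pi.neg_def] using ((hasDerivAt_id x).const_mul d).neg
    have := (h1.exp).const_sub 1
    simpa using this.congr_deriv (by ring)
  have hdiff : ∀ x ∈ Set.Ioi (0:ℝ), HasDerivAt
      (fun β : ℝ => (1 - Real.exp (-(c * β))) / (1 - Real.exp (-(d * β))))
      ((Real.exp (-(c * x)) * c * (1 - Real.exp (-(d * x))) -
        (1 - Real.exp (-(c * x))) * (Real.exp (-(d * x)) * d)) /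
        (1 - Real.exp (-(d * x))) ^ 2) x := by
    intro x hx
    exact (hnum x).div (hden' x) (hden x hx)
  apply antitoneOn_of_deriv_nonpos (convex_Ioi 0)
  · intro x hx
    exact ((hdiff x hx).continuousAt).continuousWithinAt
  · rw [interior_Ioi]
    intro x hx
    exact ((hdiff x hx).differentiableAt).differentiableWithinAt
  · rw [interior_Ioi]
    intro x hx
    rw [(hdiff x hx).deriv]
    apply div_nonpos_of_nonpos_of_nonneg _ (by positivity)
    rw [sub_nonpos]
    have hx0 : (0:ℝ) < x := hx
    set A := Real.exp (c * x) with hA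
    set B := Real.exp (d * x) with hB
    have hA1 : 1 < A := by rw [hA]; exact Real.one_lt_exp_iff.mpr (by positivity)
    have hB1 : 1 < B := by rw [hB]; exact Real.one_lt_exp_iff.mpr (by positivity)
    have hA0 : (0:ℝ) < A := by linarith
    have hB0 : (0:ℝ) < B := by linarith
    have key : (c * x) * (B - 1) ≤ (d * x) * (A - 1) := by
      simpa [hA, hB] using aux_slope (s := d * x) (t := c * x) (by positivity)
        (mul_le_mul_of_nonneg_right hdc hx0.le)
    have key2 : c * (B - 1) ≤ d * (A - 1) := by
      have := (mul_le_mul_iff_right₀ hx0).mpr key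
      nlinarith [key]
    have eA : Real.exp (-(c * x)) = A⁻¹ := by rw [hA, Real.exp_neg]
    have eB : Real.exp (-(d * x)) = B⁻¹ := by rw [hB, Real.exp_neg]
    rw [eA, eB]
    have e1 : A⁻¹ * c * (1 - B⁻¹) = (c * (B - 1)) / (A * B) := by
      field_simp
    have e2 : (1 - A⁻¹) * (B⁻¹ * d) = (d * (A - 1)) / (A * B) := by
      field_simp
    rw [e1, e2]
    exact div_le_div_of_nonneg_right key2 (by positivity)


lemma aux_mul_antitone {f g : ℝ → ℝ} {s : Set ℝ} (hf : AntitoneOn f s) (hg : AntitoneOn g s)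
    (hf0 : ∀ x ∈ s, 0 ≤ f x) (hg0 : ∀ x ∈ s, 0 ≤ g x) :
    AntitoneOn (fun x => f x * g x) s := fun x hx y hy hxy =>
  mul_le_mul (hf hx hy hxy) (hg hx hy hxy) (hg0 y hy) (hf0 x hx)

lemma aux_prod_antitone {ι : Type*} (t : Finset ι) (f : ι → ℝ → ℝ) {s : Set ℝ}
    (h : ∀ i ∈ t, AntitoneOn (f i) s) (h0 : ∀ i ∈ t, ∀ x ∈ s, 0 ≤ f i x) :
    AntitoneOn (fun x => ∏ i ∈ t, f i x) s := by
  classical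
  induction t using Finset.induction_on with
  | empty => simpa using antitoneOn_const
  | @insert a u hi ih =>
    simp only [Finset.prod_insert hi]
    exact aux_mul_antitone (h a (Finset.mem_insert_self a u))
      (ih (fun i hi => h i (Finset.mem_insert_of_mem hi))
        (fun i hi => h0 i (Finset.mem_insert_of_mem hi)))
      (h0 a (Finset.mem_insert_self a u))
      (fun x hx => Finset.prod_nonneg fun i hi => h0 i (Finset.mem_insert_of_mem hi) x hx)

lemma aux_inv_antitone {b : ℝ} (hb : 1 < b) :
    AntitoneOn (fun β : ℝ => (1 - b ^ (-β))⁻¹) (Set.Ioi 0) := by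
  intro x hx y hy hxy
  simp only [Set.mem_Ioi] at hx hy
  have hb0 : 0 < b := by linarith
  have h1 : b ^ (-y) ≤ b ^ (-x) := Real.rpow_le_rpow_left_iff hb |>.mpr (by linarith)
  have h2 : b ^ (-x) < 1 := Real.rpow_lt_one_of_one_lt_of_neg hb (by linarith)
  have h3 : (0:ℝ) < b ^ (-y) := Real.rpow_pos_of_pos hb0 _
  simp only []
  exact inv_anti₀ (by linarith) (by linarith)

lemma aux_pos_den {b : ℝ} (hb : 1 < b) {x : ℝ} (hx : 0 < x) : 0 < 1 - b ^ (-x) := by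
  have h2 : b ^ (-x) < 1 := Real.rpow_lt_one_of_one_lt_of_neg hb (by linarith)
  linarith


lemma aux_ratio_rpow {a b c : ℝ} (ha : 1 < a) (hb : 1 < b) (h : Real.log b ≤ c * Real.log a) :
    AntitoneOn (fun β : ℝ => (1 - a ^ (-(c * β))) / (1 - b ^ (-β))) (Set.Ioi 0) := by
  have heq : (fun β : ℝ => (1 - a ^ (-(c * β))) / (1 - b ^ (-β))) =
      fun β => (1 - Real.exp (-((c * Real.log a) * β))) / (1 - Real.exp (-(Real.log b * β))) := by
    funext β
    rw [Real.rpow_def_of_pos (by linarith), Real.rpow_def_of_pos (by linarith)]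
    ring_nf
  rw [heq]
  exact aux_ratio_exp (Real.log_pos hb) h

end AuxLemmas

section Main
open Real Set


set_option maxHeartbeats 1000000 in
set_option synthInstance.maxHeartbeats 100000 in
/-- For an extension `L/K` of number fields of degree `n` and a
nonzero prime `𝔭` of `𝓞_K`, the function
`β ↦ (1 - N_K(𝔭)^{-nβ}) / ∏_{𝔮 ∣ 𝔭𝓞_L} (1 - N_L(𝔮)^{-β})` is non-increasing on
`(0, 1]`. -/
theorem antitoneOn_prime_factor_ratio (K L : Type*) [Field K] [NumberField K]
    [Field L] [NumberField L] [Algebra K L]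
    (p : Ideal (𝓞 K)) (hp : p.IsPrime) (hp0 : p ≠ ⊥) :
    AntitoneOn
      (fun β : ℝ =>
        (1 - (Ideal.absNorm p : ℝ) ^ (-((Module.finrank K L : ℝ) * β))) /
          ∏ᶠ (q : Ideal (𝓞 L)) (_ : q.IsPrime ∧ q ≠ ⊥ ∧
              q ∣ Ideal.map (algebraMap (𝓞 K) (𝓞 L)) p),
            (1 - (Ideal.absNorm q : ℝ) ^ (-β)))
      (Set.Ioc (0 : ℝ) 1) := by
  classical
  set I := Ideal.map (algebraMap (𝓞 K) (𝓞 L)) p with hIdef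
  -- injectivity
  have hinj : Function.Injective (algebraMap (𝓞 K) (𝓞 L)) := by
    intro x y hxy
    have h1 : algebraMap (𝓞 K) L x = algebraMap (𝓞 K) L y := by
      rw [IsScalarTower.algebraMap_eq (𝓞 K) (𝓞 L) L]
      simp [RingHom.comp_apply, hxy]
    rw [IsScalarTower.algebraMap_eq (𝓞 K) K L] at h1
    exact FaithfulSMul.algebraMap_injective (𝓞 K) K
      ((algebraMap K L).injective (by simpa using h1))
  have hfin : Module.Finite (𝓞 K) (𝓞 L) :=
    Module.Finite.of_restrictScalars_finite ℤ (𝓞 K) (𝓞 L)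
  have hint : Algebra.IsIntegral (𝓞 K) (𝓞 L) := Algebra.IsIntegral.of_finite _ _
  have hI0 : I ≠ ⊥ := by
    rw [hIdef, Ne, Ideal.map_eq_bot_iff_of_injective hinj]
    exact hp0
  have hPmax : p.IsMaximal := hp.isMaximal hp0
  -- the finset of primes above p
  set T := (UniqueFactorizationMonoid.factors I).toFinset with hTdef
  have hcond : ∀ q : Ideal (𝓞 L), (q.IsPrime ∧ q ≠ ⊥ ∧ q ∣ I) ↔ q ∈ T := by
    intro q
    rw [hTdef, Multiset.mem_toFinset, UniqueFactorizationMonoid.factors_eq_normalizedFactors,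
      Ideal.mem_normalizedFactors_iff hI0, Ideal.dvd_iff_le]
    constructor
    · rintro ⟨h1, _, h3⟩; exact ⟨h1, h3⟩
    · rintro ⟨h1, h2⟩
      refine ⟨h1, fun hbot => hI0 ?_, h2⟩
      rw [hbot] at h2
      exact le_bot_iff.mp h2
  -- T nonempty
  have hTne : T.Nonempty := by
    obtain ⟨Q, hQge, hQprime, hQcomap⟩ := Ideal.exists_ideal_over_prime_of_isIntegral (S := 𝓞 L) p ⊥
      (by
        intro x hx
        simp only [Ideal.mem_comap, Ideal.mem_bot] at hx
        have : x = 0 := hinj (by simpa using hx)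
        simp [this])
    refine ⟨Q, (hcond Q).mp ⟨hQprime, ?_, ?_⟩⟩
    · intro hbot
      rw [hbot] at hQcomap
      apply hp0
      rw [← hQcomap]
      ext x
      simp only [Ideal.mem_comap, Ideal.mem_bot]
      constructor
      · intro hx; exact hinj (by simpa using hx)
      · intro hx; simp [hx]
    · exact Ideal.dvd_iff_le.mpr (Ideal.map_le_iff_le_comap.mpr (le_of_eq hQcomap.symm))
  -- norm facts
  haveI := hPmax
  haveI := hfin
  haveI : Fintype ((𝓞 K) ⧸ p) := @Fintype.ofFinite _ (Ideal.finiteQuotientOfFreeOfNeBot p hp0)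
  haveI : Fintype ((𝓞 L) ⧸ I) := @Fintype.ofFinite _ (Ideal.finiteQuotientOfFreeOfNeBot I hI0)
  have hP2 : 2 ≤ Ideal.absNorm p := by
    have h0 : Ideal.absNorm p ≠ 0 := (Ideal.absNorm_ne_zero_iff p).mpr (Finite.of_fintype _)
    have h1 : Ideal.absNorm p ≠ 1 := fun h => hp.ne_top (Ideal.absNorm_eq_one_iff.mp h)
    omega
  have hq2 : ∀ q ∈ T, 2 ≤ Ideal.absNorm q := by
    intro q hq
    obtain ⟨hq1, hq0, hqd⟩ := (hcond q).mpr hq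
    haveI : Fintype ((𝓞 L) ⧸ q) := @Fintype.ofFinite _ (Ideal.finiteQuotientOfFreeOfNeBot q hq0)
    have h0 : Ideal.absNorm q ≠ 0 := (Ideal.absNorm_ne_zero_iff q).mpr (Finite.of_fintype _)
    have h1 : Ideal.absNorm q ≠ 1 := fun h => hq1.ne_top (Ideal.absNorm_eq_one_iff.mp h)
    omega
  have hNI : Ideal.absNorm I = Ideal.absNorm p ^ (Module.finrank K L) := by
    letI : Field ((𝓞 K) ⧸ p) := Ideal.Quotient.field p
    have hfr : Module.finrank ((𝓞 K) ⧸ p) ((𝓞 L) ⧸ I) = Module.finrank K L :=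
      Ideal.finrank_quotient_map p K L
    have hcard := Module.card_eq_pow_finrank (K := (𝓞 K) ⧸ p) (V := (𝓞 L) ⧸ I)
    rw [Ideal.absNorm_apply, Submodule.cardQuot_apply, Ideal.absNorm_apply,
      Submodule.cardQuot_apply, Nat.card_eq_fintype_card, Nat.card_eq_fintype_card, hcard, hfr]
  have hqle : ∀ q ∈ T, Ideal.absNorm q ≤ Ideal.absNorm p ^ (Module.finrank K L) := by
    intro q hq
    obtain ⟨hq1, hq0, hqd⟩ := (hcond q).mpr hq
    have hdvd : Ideal.absNorm q ∣ Ideal.absNorm I :=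
      Ideal.absNorm_dvd_absNorm_of_le (Ideal.le_of_dvd hqd)
    rw [hNI] at hdvd
    exact Nat.le_of_dvd (by positivity) hdvd
  -- log bound
  have hlog : ∀ q ∈ T, Real.log (Ideal.absNorm q : ℝ) ≤
      (Module.finrank K L : ℝ) * Real.log (Ideal.absNorm p : ℝ) := by
    intro q hq
    have h1 : (Ideal.absNorm q : ℝ) ≤ ((Ideal.absNorm p : ℝ)) ^ (Module.finrank K L) := by
      exact_mod_cast hqle q hq
    calc Real.log (Ideal.absNorm q : ℝ) ≤
        Real.log ((Ideal.absNorm p : ℝ) ^ (Module.finrank K L)) :=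
          Real.log_le_log (by exact_mod_cast Nat.lt_of_lt_of_le Nat.zero_lt_two (hq2 q hq)) h1
      _ = (Module.finrank K L : ℝ) * Real.log (Ideal.absNorm p : ℝ) := Real.log_pow _ _
  -- rewrite the finprod as a finset product
  have hrw : (fun β : ℝ =>
        (1 - (Ideal.absNorm p : ℝ) ^ (-((Module.finrank K L : ℝ) * β))) /
          ∏ᶠ (q : Ideal (𝓞 L)) (_ : q.IsPrime ∧ q ≠ ⊥ ∧ q ∣ I),
            (1 - (Ideal.absNorm q : ℝ) ^ (-β))) =
      fun β : ℝ =>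
        (1 - (Ideal.absNorm p : ℝ) ^ (-((Module.finrank K L : ℝ) * β))) /
          ∏ q ∈ T, (1 - (Ideal.absNorm q : ℝ) ^ (-β)) := by
    funext β
    congr 1
    exact finprod_cond_eq_prod_of_cond_iff _ (fun {q} _ => hcond q)
  rw [hrw]
  obtain ⟨q₀, hq₀⟩ := hTne
  have hsplit : (fun β : ℝ =>
        (1 - (Ideal.absNorm p : ℝ) ^ (-((Module.finrank K L : ℝ) * β))) /
          ∏ q ∈ T, (1 - (Ideal.absNorm q : ℝ) ^ (-β))) =
      fun β : ℝ =>
        ((1 - (Ideal.absNorm p : ℝ) ^ (-((Module.finrank K L : ℝ) * β))) /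
          (1 - (Ideal.absNorm q₀ : ℝ) ^ (-β))) *
          ∏ q ∈ T.erase q₀, (1 - (Ideal.absNorm q : ℝ) ^ (-β))⁻¹ := by
    funext β
    rw [← Finset.mul_prod_erase _ _ hq₀, Finset.prod_inv_distrib, div_mul_eq_div_div,
      div_eq_mul_inv]
  rw [hsplit]
  have hP1 : (1:ℝ) < (Ideal.absNorm p : ℝ) := by exact_mod_cast Nat.lt_of_lt_of_le Nat.one_lt_two hP2
  have hq1 : ∀ q ∈ T, (1:ℝ) < (Ideal.absNorm q : ℝ) := fun q hq => by
    exact_mod_cast Nat.lt_of_lt_of_le Nat.one_lt_two (hq2 q hq)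
  apply aux_mul_antitone
  · exact (aux_ratio_rpow hP1 (hq1 q₀ hq₀) (hlog q₀ hq₀)).mono Set.Ioc_subset_Ioi_self
  · apply aux_prod_antitone
    · intro q hq
      exact (aux_inv_antitone (hq1 q (Finset.mem_of_mem_erase hq))).mono Set.Ioc_subset_Ioi_self
    · intro q hq x hx
      exact (inv_nonneg).mpr (aux_pos_den (hq1 q (Finset.mem_of_mem_erase hq)) hx.1).le
  · intro x hx
    apply div_nonneg
    · have : (Ideal.absNorm p : ℝ) ^ (-((Module.finrank K L : ℝ) * x)) ≤ 1 :=
        Real.rpow_le_one_of_one_le_of_nonpos hP1.le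
          (neg_nonpos.mpr (mul_nonneg (Nat.cast_nonneg _) hx.1.le))
      linarith
    · exact (aux_pos_den (hq1 q₀ hq₀) hx.1).le
  · intro x hx
    exact Finset.prod_nonneg fun q hq =>
      (inv_nonneg).mpr (aux_pos_den (hq1 q (Finset.mem_of_mem_erase hq)) hx.1).le

end Main
end
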